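/- arXiv:1906.11448 — 5 statements merged into one kernel-verified Lean document; each statement's English description precedes it below -/
import Mathlib

section
/- Let N and M be elements of GL(3,ℤ) such that (i) N·M = M·N, (ii) 1 is an eigenvalue of N^n·M^m for every (n,m) ∈ ℤ², and (iii) the only k ∈ ℤ³ satisfying N^n·M^m·k = k for all (n,m) ∈ ℤ² is k = 0. Then there exist P ∈ GL(3,ℤ) and integers a, b, c, d such that P⁻¹ N P = N(a,b) and P⁻¹ M P = M(c,d). -/
set_option maxHeartbeats 1600000

open Matrix

/-- The matrix N(a,b) = [[1,a,b],[0,-1,0],[0,0,-1]]. -/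
def Nmat (a b : ℤ) : Matrix (Fin 3) (Fin 3) ℤ := !![1, a, b; 0, -1, 0; 0, 0, -1]

/-- The matrix M(c,d) = [[-1,0,c],[0,-1,d],[0,0,1]]. -/
def Mmat (c d : ℤ) : Matrix (Fin 3) (Fin 3) ℤ := !![-1, 0, c; 0, -1, d; 0, 0, 1]

namespace NFAux

def castM (X : Matrix (Fin 3) (Fin 3) ℤ) : Matrix (Fin 3) (Fin 3) ℚ :=
  X.map (fun x : ℤ => (x : ℚ))

def cv (k : Fin 3 → ℤ) : Fin 3 → ℚ := fun i => (k i : ℚ)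

lemma cv_eq_zero {k : Fin 3 → ℤ} (h : cv k = 0) : k = 0 := by
  funext i
  have := congrFun h i
  simp [cv] at this
  exact_mod_cast this

lemma mulVec_cv (A : Matrix (Fin 3) (Fin 3) ℤ) (k : Fin 3 → ℤ) :
    (castM A) *ᵥ (cv k) = cv (A *ᵥ k) := by
  funext i
  simp [cv, castM, Matrix.mulVec, dotProduct, Fin.sum_univ_three]

lemma num_eq (r : ℚ) : (r.num : ℚ) = r * (r.den : ℚ) := by
  have hd : ((r.den : ℚ)) ≠ 0 := by
    exact_mod_cast r.den_ne_zero
  exact ((div_eq_iff hd).mp (Rat.num_div_den r))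

/-- clear denominators of a rational vector -/
lemma exists_cv_smul (v : Fin 3 → ℚ) :
    ∃ (k : Fin 3 → ℤ) (q : ℚ), q ≠ 0 ∧ cv k = q • v := by
  refine ⟨![(v 0).num * (v 1).den * (v 2).den,
           (v 0).den * ((v 1).num * (v 2).den),
           (v 0).den * ((v 1).den * (v 2).num)],
          (((v 0).den * (v 1).den * (v 2).den : ℤ) : ℚ), ?_, ?_⟩
  · push_cast
    positivity
  · funext i
    fin_cases i <;>
      · simp [cv]
        push_cast
        rw [num_eq]
        ring

lemma exists_cv_smul' (v : Fin 3 → ℚ) (hv : v ≠ 0) :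
    ∃ (k : Fin 3 → ℤ) (q : ℚ), q ≠ 0 ∧ k ≠ 0 ∧ cv k = q • v := by
  obtain ⟨k, q, hq, hkv⟩ := exists_cv_smul v
  refine ⟨k, q, hq, ?_, hkv⟩
  rintro rfl
  apply hv
  have : q • v = 0 := by rw [← hkv]; funext i; simp [cv]
  simpa [hq] using this


def colM (v w u : Fin 3 → ℚ) : Matrix (Fin 3) (Fin 3) ℚ :=
  Matrix.of fun i j => ![v, w, u] j i

lemma colM_mulVec (v w u c : Fin 3 → ℚ) :
    (colM v w u) *ᵥ c = c 0 • v + c 1 • w + c 2 • u := by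
  funext i
  simp [colM, Matrix.mulVec, dotProduct, Fin.sum_univ_three]
  ring

lemma colM_isUnit {v w u : Fin 3 → ℚ}
    (hind : ∀ x y z : ℚ, x • v + y • w + z • u = 0 → x = 0 ∧ y = 0 ∧ z = 0) :
    IsUnit (colM v w u).det := by
  rw [isUnit_iff_ne_zero]
  intro hdet
  obtain ⟨c, hc0, hc⟩ := (Matrix.exists_mulVec_eq_zero_iff).mpr hdet
  rw [colM_mulVec] at hc
  obtain ⟨h1, h2, h3⟩ := hind _ _ _ hc
  apply hc0
  funext i
  fin_cases i <;> assumption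

lemma exists_single_notin_span (v w : Fin 3 → ℚ) :
    ∃ i : Fin 3, ¬∃ x y : ℚ, Pi.single i (1:ℚ) = x • v + y • w := by
  by_contra h
  push_neg at h
  choose x y hxy using h
  have key : (Matrix.of fun i j => ![x i, y i, 0] j) * (Matrix.of ![v, w, 0]) = 1 := by
    funext i j
    have := congrFun (hxy i) j
    simp [Matrix.mul_apply, Fin.sum_univ_three, Matrix.one_apply, Pi.single_apply] at this ⊢
    rw [← this]
    simp [eq_comm]
  have hdet := congrArg Matrix.det key
  rw [Matrix.det_mul, Matrix.det_one] at hdet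
  have : (Matrix.of fun i j => ![x i, y i, (0:ℚ)] j).det = 0 := by
    apply Matrix.det_eq_zero_of_column_eq_zero 2
    intro i
    simp
  rw [this, zero_mul] at hdet
  exact one_ne_zero hdet.symm

lemma conj_det {Q Qi X Y : Matrix (Fin 3) (Fin 3) ℚ} (hQr : Q * Qi = 1)
    (h : X * Q = Q * Y) : X.det = Y.det := by
  have hQd : Q.det * Qi.det = 1 := by rw [← Matrix.det_mul, hQr, Matrix.det_one]
  have hQ0 : Q.det ≠ 0 := left_ne_zero_of_mul_eq_one hQd
  have h2 := congrArg Matrix.det h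
  rw [Matrix.det_mul, Matrix.det_mul] at h2
  apply mul_right_cancel₀ hQ0
  rw [h2]; ring

lemma conj_sub_one_det {Q Qi X Y : Matrix (Fin 3) (Fin 3) ℚ} (hQr : Q * Qi = 1)
    (h : X * Q = Q * Y) : (X - 1).det = (Y - 1).det := by
  apply conj_det hQr
  rw [sub_mul, mul_sub, h, one_mul, mul_one]

lemma entry_single (X : Matrix (Fin 3) (Fin 3) ℚ) (i j : Fin 3) :
    (X *ᵥ Pi.single j 1) i = X i j := by
  simp [Matrix.mulVec_single]

lemma det3_of (a11 a12 a13 a21 a22 a23 a31 a32 a33 : ℚ) :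
    (!![a11,a12,a13;a21,a22,a23;a31,a32,a33]).det =
      a11*a22*a33 - a11*a23*a32 - a12*a21*a33 + a12*a23*a31 + a13*a21*a32 - a13*a22*a31 := by
  rw [Matrix.det_fin_three]
  simp

lemma sub_one3 (a11 a12 a13 a21 a22 a23 a31 a32 a33 : ℚ) :
    !![a11,a12,a13;a21,a22,a23;a31,a32,a33] - 1 =
      !![a11-1,a12,a13;a21,a22-1,a23;a31,a32,a33-1] := by
  rw [Matrix.one_fin_three]
  funext i j
  fin_cases i <;> fin_cases j <;> simp [Matrix.sub_apply, Matrix.vecHead, Matrix.vecTail]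

/-- the fixed space of Aq is (at most) a line -/
lemma fixed_line
    (Aq Bq : Matrix (Fin 3) (Fin 3) ℚ)
    (hcomm : Aq * Bq = Bq * Aq)
    (hdetA : Aq.det = 1 ∨ Aq.det = -1)
    (hB1 : (Bq - 1).det = 0)
    (hAB1 : (Aq * Bq - 1).det = 0)
    (hfixQ : ∀ x : Fin 3 → ℚ, Aq *ᵥ x = x → Bq *ᵥ x = x → x = 0)
    (v w : Fin 3 → ℚ) (hv : Aq *ᵥ v = v) (hw : Aq *ᵥ w = w) (hv0 : v ≠ 0) :
    ∃ r : ℚ, w = r • v := by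
  by_contra hno
  push_neg at hno
  have hind2 : ∀ x y : ℚ, x • v + y • w = 0 → x = 0 ∧ y = 0 := by
    intro x y h
    by_cases hy : y = 0
    · subst hy
      simp only [zero_smul, add_zero] at h
      rcases smul_eq_zero.mp h with h1 | h1
      · exact ⟨h1, rfl⟩
      · exact absurd h1 hv0
    · exfalso
      apply hno (-(x/y))
      have hyw : y • w = -(x • v) := by linear_combination (norm := module) h
      have h2 : w = y⁻¹ • (y • w) := by rw [smul_smul, inv_mul_cancel₀ hy, one_smul]
      rw [h2, hyw]
      match_scalars
      field_simp
  obtain ⟨f, hf0, hfB'⟩ := (Matrix.exists_mulVec_eq_zero_iff).mpr hB1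
  have hfB : Bq *ᵥ f = f := by
    have h1 : Bq *ᵥ f - 1 *ᵥ f = 0 := by rw [← Matrix.sub_mulVec]; exact hfB'
    rw [Matrix.one_mulVec] at h1
    linear_combination (norm := module) h1
  by_cases hex : ∃ u, Aq *ᵥ u = u ∧ ¬∃ x y : ℚ, u = x • v + y • w
  · obtain ⟨u, huA, hunot⟩ := hex
    have hind3 : ∀ x y z : ℚ, x • v + y • w + z • u = 0 → x = 0 ∧ y = 0 ∧ z = 0 := by
      intro x y z h
      by_cases hz : z = 0
      · subst hz
        simp only [zero_smul, add_zero] at h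
        obtain ⟨h1, h2⟩ := hind2 _ _ h
        exact ⟨h1, h2, rfl⟩
      · exfalso
        apply hunot
        refine ⟨-(x/z), -(y/z), ?_⟩
        have hzu : z • u = -(x • v) - y • w := by linear_combination (norm := module) h
        have h2 : u = z⁻¹ • (z • u) := by rw [smul_smul, inv_mul_cancel₀ hz, one_smul]
        rw [h2, hzu]
        match_scalars <;> field_simp
    set Q := colM v w u with hQdef
    have hQu := colM_isUnit hind3
    have hQr : Q * Q⁻¹ = 1 := Matrix.mul_nonsing_inv _ hQu
    have hc : f = (Q⁻¹ *ᵥ f) 0 • v + (Q⁻¹ *ᵥ f) 1 • w + (Q⁻¹ *ᵥ f) 2 • u := by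
      rw [← colM_mulVec, ← hQdef, Matrix.mulVec_mulVec, hQr, Matrix.one_mulVec]
    have hfA : Aq *ᵥ f = f := by
      conv_lhs => rw [hc]
      rw [Matrix.mulVec_add, Matrix.mulVec_add, Matrix.mulVec_smul, Matrix.mulVec_smul,
        Matrix.mulVec_smul, hv, hw, huA, ← hc]
    exact hf0 (hfixQ f hfA hfB)
  · push_neg at hex
    obtain ⟨i0, hi0⟩ := exists_single_notin_span v w
    set g : Fin 3 → ℚ := Pi.single i0 1 with hgdef
    have hind3 : ∀ x y z : ℚ, x • v + y • w + z • g = 0 → x = 0 ∧ y = 0 ∧ z = 0 := by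
      intro x y z h
      by_cases hz : z = 0
      · subst hz
        simp only [zero_smul, add_zero] at h
        obtain ⟨h1, h2⟩ := hind2 _ _ h
        exact ⟨h1, h2, rfl⟩
      · exfalso
        apply hi0
        refine ⟨-(x/z), -(y/z), ?_⟩
        have hzg : z • g = -(x • v) - y • w := by linear_combination (norm := module) h
        have h2 : g = z⁻¹ • (z • g) := by rw [smul_smul, inv_mul_cancel₀ hz, one_smul]
        rw [h2, hzg]
        match_scalars <;> field_simp
    set Q := colM v w g with hQdef
    have hQu := colM_isUnit hind3
    have hQr : Q * Q⁻¹ = 1 := Matrix.mul_nonsing_inv _ hQu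
    have hQl : Q⁻¹ * Q = 1 := Matrix.nonsing_inv_mul _ hQu
    have hinj : ∀ x y : Fin 3 → ℚ, Q *ᵥ x = Q *ᵥ y → x = y := by
      intro x y hxy
      have := congrArg (fun z => Q⁻¹ *ᵥ z) hxy
      simpa [Matrix.mulVec_mulVec, hQl, Matrix.one_mulVec] using this
    set T := Q⁻¹ * (Aq * Q) with hTdef
    have hQT : Q * T = Aq * Q := by
      rw [hTdef, ← mul_assoc, hQr, one_mul]
    have keyT : ∀ c, Q *ᵥ (T *ᵥ c) = Aq *ᵥ (Q *ᵥ c) := by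
      intro c
      rw [Matrix.mulVec_mulVec, hQT, ← Matrix.mulVec_mulVec]
    have hQ0 : Q *ᵥ Pi.single 0 1 = v := by
      rw [hQdef, colM_mulVec]; simp
    have hQ1 : Q *ᵥ Pi.single 1 1 = w := by
      rw [hQdef, colM_mulVec]; simp
    have hT0 : T *ᵥ Pi.single 0 1 = Pi.single 0 1 := by
      apply hinj
      rw [keyT, hQ0]
      exact hv
    have hT1 : T *ᵥ Pi.single 1 1 = Pi.single 1 1 := by
      apply hinj
      rw [keyT, hQ1]
      exact hw
    set a := T 0 2 with hadef
    set b := T 1 2 with hbdef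
    set t := T 2 2 with htdef
    have e0 : ∀ i, T i 0 = (Pi.single 0 1 : Fin 3 → ℚ) i :=
      fun i => (entry_single T i 0).symm.trans (congrFun hT0 i)
    have e1 : ∀ i, T i 1 = (Pi.single 1 1 : Fin 3 → ℚ) i :=
      fun i => (entry_single T i 1).symm.trans (congrFun hT1 i)
    have hTmat : T = !![1,0,a;0,1,b;0,0,t] := by
      funext i j
      fin_cases i <;> fin_cases j <;>
        first
        | (simpa [e0])
        | (simpa [e1])
        | (simpa using hadef)
        | (simpa using hbdef)
        | (simpa using htdef)
    have hdetT : T.det = Aq.det := (conj_det hQr hQT.symm).symm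
    have hdetTval : T.det = t := by
      rw [hTmat, det3_of]
      ring
    rcases hdetA with hdA | hdA
    · -- det Aq = 1, so t = 1 and (Aq - 1)² = 0
      have ht : t = 1 := by rw [← hdetTval, hdetT, hdA]
      have hTsub : T - 1 = !![0,0,a;0,0,b;0,0,0] := by
        rw [hTmat, ht, sub_one3]
        norm_num
      have hnil : (T - 1) * (T - 1) = 0 := by
        rw [hTsub, Matrix.mul_fin_three]
        funext i j
        fin_cases i <;> fin_cases j <;> simp [Matrix.vecHead, Matrix.vecTail]
      have hAnil : (Aq - 1) * (Aq - 1) = 0 := by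
        have h1 : (Aq - 1) * Q = Q * (T - 1) := by
          rw [sub_mul, mul_sub, ← hQT, one_mul, mul_one]
        have h2 : ((Aq - 1) * (Aq - 1)) * Q = Q * ((T - 1) * (T - 1)) := by
          rw [mul_assoc (Aq - 1) (Aq - 1) Q, h1, ← mul_assoc (Aq - 1) Q (T - 1), h1,
            mul_assoc Q (T - 1) (T - 1)]
        calc (Aq - 1) * (Aq - 1) = (((Aq - 1) * (Aq - 1)) * Q) * Q⁻¹ := by
              rw [mul_assoc ((Aq - 1) * (Aq - 1)) Q Q⁻¹, hQr, mul_one]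
          _ = (Q * ((T - 1) * (T - 1))) * Q⁻¹ := by rw [h2]
          _ = 0 := by rw [hnil, mul_zero, zero_mul]
      set z := Aq *ᵥ f - f with hzdef
      have hz1 : z = (Aq - 1) *ᵥ f := by
        rw [Matrix.sub_mulVec, Matrix.one_mulVec]
      have hzA : Aq *ᵥ z = z := by
        have h3 : (Aq - 1) *ᵥ z = 0 := by
          rw [hz1, Matrix.mulVec_mulVec, hAnil, Matrix.zero_mulVec]
        rw [Matrix.sub_mulVec, Matrix.one_mulVec] at h3
        linear_combination (norm := module) h3
      have hzB : Bq *ᵥ z = z := by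
        rw [hzdef, Matrix.mulVec_sub, Matrix.mulVec_mulVec, ← hcomm,
          ← Matrix.mulVec_mulVec, hfB]
      have hz0 := hfixQ z hzA hzB
      have hfA : Aq *ᵥ f = f := sub_eq_zero.mp (hzdef ▸ hz0)
      exact hf0 (hfixQ f hfA hfB)
    · -- det Aq = -1, so t = -1
      have ht : t = -1 := by rw [← hdetTval, hdetT, hdA]
      set S := Q⁻¹ * (Bq * Q) with hSdef
      have hQS : Q * S = Bq * Q := by
        rw [hSdef, ← mul_assoc, hQr, one_mul]
      have keyS : ∀ c, Q *ᵥ (S *ᵥ c) = Bq *ᵥ (Q *ᵥ c) := by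
        intro c
        rw [Matrix.mulVec_mulVec, hQS, ← Matrix.mulVec_mulVec]
      -- columns of S
      have hBvA : Aq *ᵥ (Bq *ᵥ v) = Bq *ᵥ v := by
        rw [Matrix.mulVec_mulVec, hcomm, ← Matrix.mulVec_mulVec, hv]
      have hBwA : Aq *ᵥ (Bq *ᵥ w) = Bq *ᵥ w := by
        rw [Matrix.mulVec_mulVec, hcomm, ← Matrix.mulVec_mulVec, hw]
      obtain ⟨x0, y0, hx0⟩ := hex (Bq *ᵥ v) hBvA
      obtain ⟨x2, y2, hx2⟩ := hex (Bq *ᵥ w) hBwA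
      have hS0 : S *ᵥ Pi.single 0 1 = ![x0, y0, 0] := by
        apply hinj
        rw [keyS, hQ0, hQdef, colM_mulVec, hx0]
        simp
      have hS1 : S *ᵥ Pi.single 1 1 = ![x2, y2, 0] := by
        apply hinj
        rw [keyS, hQ1, hQdef, colM_mulVec, hx2]
        simp
      have f0' : ∀ i, S i 0 = ![x0, y0, (0:ℚ)] i :=
        fun i => (entry_single S i 0).symm.trans (congrFun hS0 i)
      have f1' : ∀ i, S i 1 = ![x2, y2, (0:ℚ)] i :=
        fun i => (entry_single S i 1).symm.trans (congrFun hS1 i)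
      set p := S 0 0 with hpdef
      set q := S 0 1 with hqdef
      set x1 := S 0 2 with hx1def
      set r := S 1 0 with hrdef
      set s := S 1 1 with hsdef
      set y1 := S 1 2 with hy1def
      set z := S 2 2 with hzdef
      have hSmat : S = !![p,q,x1;r,s,y1;0,0,z] := by
        funext i j
        fin_cases i <;> fin_cases j <;>
          first
          | (simpa using hpdef)
          | (simpa using hqdef)
          | (simpa using hx1def)
          | (simpa using hrdef)
          | (simpa using hsdef)
          | (simpa using hy1def)
          | (simpa using hzdef)
          | (simpa [f0'])
          | (simpa [f1'])
      have hQTS : (Aq * Bq) * Q = Q * (T * S) := by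
        rw [mul_assoc, ← hQS, ← mul_assoc, ← hQT, mul_assoc]
      have hdetTS : ((T * S) - 1).det = 0 := by
        rw [← conj_sub_one_det hQr hQTS]
        exact hAB1
      have hfact : ((T * S) - 1).det = (-z - 1) * ((p - 1) * (s - 1) - q * r) := by
        rw [hTmat, ht, hSmat, Matrix.mul_fin_three, sub_one3, det3_of]
        ring
      rw [hfact] at hdetTS
      rcases mul_eq_zero.mp hdetTS with hcase | hcase
      · -- z = -1 : B-fixed vector lies in the A-fixed plane
        have hz : z = -1 := by linarith
        set yf := Q⁻¹ *ᵥ f with hyfdef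
        have hfq : f = Q *ᵥ yf := by
          rw [hyfdef, Matrix.mulVec_mulVec, hQr, Matrix.one_mulVec]
        have hSyf : S *ᵥ yf = yf := by
          apply hinj
          rw [keyS, ← hfq, hfB, hfq]
        have hyf2 : yf 2 = 0 := by
          have h4 := congrFun hSyf 2
          rw [hSmat] at h4
          simp [Matrix.mulVec, dotProduct, Fin.sum_univ_three] at h4
          rw [hz] at h4
          linarith
        have hTyf : T *ᵥ yf = yf := by
          funext i
          rw [hTmat]
          fin_cases i <;>
            simp [Matrix.mulVec, dotProduct, Fin.sum_univ_three, hyf2, ht]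
        have hfA : Aq *ᵥ f = f := by
          rw [hfq, ← keyT, hTyf]
        exact hf0 (hfixQ f hfA hfB)
      · -- the 2x2 block has a fixed vector: common fixed vector
        have hdet2 : (!![p-1, q; r, s-1]).det = 0 := by
          rw [Matrix.det_fin_two_of]
          linarith
        obtain ⟨c, hc0, hc⟩ := (Matrix.exists_mulVec_eq_zero_iff).mpr hdet2
        have eq1 : (p-1) * c 0 + q * c 1 = 0 := by
          have := congrFun hc 0
          simpa [Matrix.mulVec, dotProduct, Fin.sum_univ_two] using this
        have eq2 : r * c 0 + (s-1) * c 1 = 0 := by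
          have := congrFun hc 1
          simpa [Matrix.mulVec, dotProduct, Fin.sum_univ_two] using this
        set yv : Fin 3 → ℚ := ![c 0, c 1, 0] with hyvdef
        have hyv0 : yv ≠ 0 := by
          intro h
          apply hc0
          funext i
          fin_cases i
          · exact congrFun h 0
          · exact congrFun h 1
        have hSy : S *ᵥ yv = yv := by
          funext i
          rw [hSmat]
          fin_cases i <;>
            simp [Matrix.mulVec, dotProduct, Fin.sum_univ_three, hyvdef] <;>
            linarith
        have hTy : T *ᵥ yv = yv := by
          funext i
          rw [hTmat]
          fin_cases i <;>
            simp [Matrix.mulVec, dotProduct, Fin.sum_univ_three, hyvdef]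
        set wv := Q *ᵥ yv with hwvdef
        have hwv0 : wv ≠ 0 := by
          intro h
          apply hyv0
          apply hinj
          rw [← hwvdef, h, Matrix.mulVec_zero]
        have hwA : Aq *ᵥ wv = wv := by
          rw [hwvdef, ← keyT, hTy]
        have hwB : Bq *ᵥ wv = wv := by
          rw [hwvdef, ← keyS, hSy]
        exact hwv0 (hfixQ wv hwA hwB)


/-- Phase 1: the rational structure theorem. -/
lemma phase1
    (Aq Bq : Matrix (Fin 3) (Fin 3) ℚ)
    (hcomm : Aq * Bq = Bq * Aq)
    (hdetA : Aq.det = 1 ∨ Aq.det = -1)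
    (hdetB : Bq.det = 1 ∨ Bq.det = -1)
    (hA1 : (Aq - 1).det = 0)
    (hB1 : (Bq - 1).det = 0)
    (hAB1 : (Aq * Bq - 1).det = 0)
    (hAAB1 : (Aq * (Aq * Bq) - 1).det = 0)
    (hABB1 : (Aq * (Bq * Bq) - 1).det = 0)
    (hfixQ : ∀ x : Fin 3 → ℚ, Aq *ᵥ x = x → Bq *ᵥ x = x → x = 0) :
    Aq * Aq = 1 ∧ Bq * Bq = 1 ∧
    ∃ e f h : Fin 3 → ℚ,
      e ≠ 0 ∧ f ≠ 0 ∧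
      Aq *ᵥ e = e ∧ Bq *ᵥ e = -e ∧
      Bq *ᵥ f = f ∧ Aq *ᵥ f = -f ∧
      (∀ x, Aq *ᵥ x = x → ∃ ρ : ℚ, x = ρ • e) ∧
      Bq *ᵥ h = -h ∧
      (∀ α β : ℚ, α • e + β • h = 0 → α = 0 ∧ β = 0) := by
  have lineA := fixed_line Aq Bq hcomm hdetA hB1 hAB1 hfixQ
  have hBA1 : (Bq * Aq - 1).det = 0 := by rw [← hcomm]; exact hAB1
  have lineB := fixed_line Bq Aq hcomm.symm hdetB hA1 hBA1
    (fun x hB hA => hfixQ x hA hB)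
  -- fixed vectors
  obtain ⟨e, he0, heker⟩ := (Matrix.exists_mulVec_eq_zero_iff).mpr hA1
  have hAe : Aq *ᵥ e = e := by
    have h1 : Aq *ᵥ e - 1 *ᵥ e = 0 := by rw [← Matrix.sub_mulVec]; exact heker
    rw [Matrix.one_mulVec] at h1
    linear_combination (norm := module) h1
  obtain ⟨f, hf0, hfker⟩ := (Matrix.exists_mulVec_eq_zero_iff).mpr hB1
  have hBf : Bq *ᵥ f = f := by
    have h1 : Bq *ᵥ f - 1 *ᵥ f = 0 := by rw [← Matrix.sub_mulVec]; exact hfker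
    rw [Matrix.one_mulVec] at h1
    linear_combination (norm := module) h1
  -- A acts on the B-line and conversely
  have hAfB : Bq *ᵥ (Aq *ᵥ f) = Aq *ᵥ f := by
    rw [Matrix.mulVec_mulVec, ← hcomm, ← Matrix.mulVec_mulVec, hBf]
  obtain ⟨r, hr⟩ := lineB f (Aq *ᵥ f) hBf hAfB hf0
  have hr1 : r ≠ 1 := by
    intro h
    rw [h, one_smul] at hr
    exact hf0 (hfixQ f hr hBf)
  have hBeA : Aq *ᵥ (Bq *ᵥ e) = Bq *ᵥ e := by
    rw [Matrix.mulVec_mulVec, hcomm, ← Matrix.mulVec_mulVec, hAe]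
  obtain ⟨r', hr'⟩ := lineA e (Bq *ᵥ e) hAe hBeA he0
  have hr'1 : r' ≠ 1 := by
    intro h
    rw [h, one_smul] at hr'
    exact he0 (hfixQ e hAe hr')
  -- independence of e, f
  have hind2 : ∀ x y : ℚ, x • e + y • f = 0 → x = 0 ∧ y = 0 := by
    intro x y h
    by_cases hy : y = 0
    · subst hy
      simp only [zero_smul, add_zero] at h
      rcases smul_eq_zero.mp h with h1 | h1
      · exact ⟨h1, rfl⟩
      · exact absurd h1 he0
    · exfalso
      have hfe : f = (-(x/y)) • e := by
        have hyw : y • f = -(x • e) := by linear_combination (norm := module) h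
        have h2 : f = y⁻¹ • (y • f) := by rw [smul_smul, inv_mul_cancel₀ hy, one_smul]
        rw [h2, hyw]
        match_scalars
        field_simp
      have : Aq *ᵥ f = f := by
        rw [hfe, Matrix.mulVec_smul, hAe]
      exact hf0 (hfixQ f this hBf)
  obtain ⟨i0, hi0⟩ := exists_single_notin_span e f
  set g : Fin 3 → ℚ := Pi.single i0 1 with hgdef
  have hind3 : ∀ x y z : ℚ, x • e + y • f + z • g = 0 → x = 0 ∧ y = 0 ∧ z = 0 := by
    intro x y z h
    by_cases hz : z = 0
    · subst hz
      simp only [zero_smul, add_zero] at h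
      obtain ⟨h1, h2⟩ := hind2 _ _ h
      exact ⟨h1, h2, rfl⟩
    · exfalso
      apply hi0
      refine ⟨-(x/z), -(y/z), ?_⟩
      have hzg : z • g = -(x • e) - y • f := by linear_combination (norm := module) h
      have h2 : g = z⁻¹ • (z • g) := by rw [smul_smul, inv_mul_cancel₀ hz, one_smul]
      rw [h2, hzg]
      match_scalars <;> field_simp
  set Q := colM e f g with hQdef
  have hQu := colM_isUnit hind3
  have hQr : Q * Q⁻¹ = 1 := Matrix.mul_nonsing_inv _ hQu
  have hQl : Q⁻¹ * Q = 1 := Matrix.nonsing_inv_mul _ hQu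
  have hinj : ∀ x y : Fin 3 → ℚ, Q *ᵥ x = Q *ᵥ y → x = y := by
    intro x y hxy
    have := congrArg (fun z => Q⁻¹ *ᵥ z) hxy
    simpa [Matrix.mulVec_mulVec, hQl, Matrix.one_mulVec] using this
  set T := Q⁻¹ * (Aq * Q) with hTdef
  set S := Q⁻¹ * (Bq * Q) with hSdef
  have hQT : Q * T = Aq * Q := by rw [hTdef, ← mul_assoc, hQr, one_mul]
  have hQS : Q * S = Bq * Q := by rw [hSdef, ← mul_assoc, hQr, one_mul]
  have keyT : ∀ c, Q *ᵥ (T *ᵥ c) = Aq *ᵥ (Q *ᵥ c) := by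
    intro c
    rw [Matrix.mulVec_mulVec, hQT, ← Matrix.mulVec_mulVec]
  have keyS : ∀ c, Q *ᵥ (S *ᵥ c) = Bq *ᵥ (Q *ᵥ c) := by
    intro c
    rw [Matrix.mulVec_mulVec, hQS, ← Matrix.mulVec_mulVec]
  have hQ0 : Q *ᵥ Pi.single 0 1 = e := by rw [hQdef, colM_mulVec]; simp
  have hQ1 : Q *ᵥ Pi.single 1 1 = f := by rw [hQdef, colM_mulVec]; simp
  have hQ2 : Q *ᵥ Pi.single 2 1 = g := by rw [hQdef, colM_mulVec]; simp
  have hT0 : T *ᵥ Pi.single 0 1 = Pi.single 0 1 := by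
    apply hinj
    rw [keyT, hQ0]
    exact hAe
  have hT1 : T *ᵥ Pi.single 1 1 = ![(0:ℚ), r, 0] := by
    apply hinj
    rw [keyT, hQ1, hr, hQdef, colM_mulVec]
    simp
  have hS0 : S *ᵥ Pi.single 0 1 = ![r', 0, 0] := by
    apply hinj
    rw [keyS, hQ0, hr', hQdef, colM_mulVec]
    simp
  have hS1 : S *ᵥ Pi.single 1 1 = Pi.single 1 1 := by
    apply hinj
    rw [keyS, hQ1]
    exact hBf
  set a := T 0 2 with hadef
  set b := T 1 2 with hbdef
  set t := T 2 2 with htdef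
  set c := S 0 2 with hcdef
  set d := S 1 2 with hddef
  set s := S 2 2 with hsdef
  have eT0 : ∀ i, T i 0 = (Pi.single 0 1 : Fin 3 → ℚ) i :=
    fun i => (entry_single T i 0).symm.trans (congrFun hT0 i)
  have eT1 : ∀ i, T i 1 = ![(0:ℚ), r, 0] i :=
    fun i => (entry_single T i 1).symm.trans (congrFun hT1 i)
  have eS0 : ∀ i, S i 0 = ![r', (0:ℚ), 0] i :=
    fun i => (entry_single S i 0).symm.trans (congrFun hS0 i)
  have eS1 : ∀ i, S i 1 = (Pi.single 1 1 : Fin 3 → ℚ) i :=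
    fun i => (entry_single S i 1).symm.trans (congrFun hS1 i)
  have hTmat : T = !![1,0,a;0,r,b;0,0,t] := by
    funext i j
    fin_cases i <;> fin_cases j <;>
      first
      | (simpa [eT0])
      | (simpa [eT1])
      | (simpa using hadef)
      | (simpa using hbdef)
      | (simpa using htdef)
  have hSmat : S = !![r',0,c;0,1,d;0,0,s] := by
    funext i j
    fin_cases i <;> fin_cases j <;>
      first
      | (simpa [eS0])
      | (simpa [eS1])
      | (simpa using hcdef)
      | (simpa using hddef)
      | (simpa using hsdef)
  -- determinants
  have hdetT : T.det = Aq.det := (conj_det hQr hQT.symm).symm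
  have hdetS : S.det = Bq.det := (conj_det hQr hQS.symm).symm
  have hdetTval : T.det = r * t := by rw [hTmat, det3_of]; ring
  have hdetSval : S.det = r' * s := by rw [hSmat, det3_of]; ring
  have hrt : r * t = 1 ∨ r * t = -1 := by
    rw [← hdetTval, hdetT]; exact hdetA
  have hr's : r' * s = 1 ∨ r' * s = -1 := by
    rw [← hdetSval, hdetS]; exact hdetB
  have ht0 : t ≠ 0 := by
    intro h
    rcases hrt with h1 | h1 <;> rw [h] at h1 <;> simp at h1 <;> linarith
  have hr0 : r ≠ 0 := by
    intro h
    rcases hrt with h1 | h1 <;> rw [h] at h1 <;> simp at h1 <;> linarith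
  -- det(TS - 1) = 0 gives t*s = 1
  have hQTS : (Aq * Bq) * Q = Q * (T * S) := by
    rw [mul_assoc, ← hQS, ← mul_assoc, ← hQT, mul_assoc]
  have hdetTS : ((T * S) - 1).det = 0 := by
    rw [← conj_sub_one_det hQr hQTS]; exact hAB1
  have hfacTS : ((T * S) - 1).det = (r' - 1) * ((r - 1) * (t * s - 1)) := by
    rw [hTmat, hSmat, Matrix.mul_fin_three, sub_one3, det3_of]; ring
  have hts : t * s = 1 := by
    rw [hfacTS] at hdetTS
    rcases mul_eq_zero.mp hdetTS with h1 | h1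
    · exact absurd (by linarith : r' = 1) hr'1
    rcases mul_eq_zero.mp h1 with h2 | h2
    · exact absurd (by linarith : r = 1) hr1
    · linarith
  -- det(TTS - 1) = 0 gives r² = 1 ∨ t = 1
  have hQTTS : (Aq * (Aq * Bq)) * Q = Q * (T * (T * S)) := by
    rw [mul_assoc Aq (Aq * Bq) Q, hQTS, ← mul_assoc, ← hQT, mul_assoc]
  have hdetTTS : ((T * (T * S)) - 1).det = 0 := by
    rw [← conj_sub_one_det hQr hQTTS]; exact hAAB1
  have hfacTTS : ((T * (T * S)) - 1).det =
      (r' - 1) * ((r * r - 1) * (t * (t * s) - 1)) := by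
    rw [hTmat, hSmat, Matrix.mul_fin_three, Matrix.mul_fin_three, sub_one3, det3_of]; ring
  have hmain1 : r * r = 1 ∨ t = 1 := by
    rw [hfacTTS] at hdetTTS
    rcases mul_eq_zero.mp hdetTTS with h1 | h1
    · exact absurd (by linarith : r' = 1) hr'1
    rcases mul_eq_zero.mp h1 with h2 | h2
    · left; linarith
    · right
      have : t * (t * s) = t := by rw [hts, mul_one]
      rw [this] at h2
      linarith
  -- det(ABB - 1) = 0 gives r'² = 1 ∨ s = 1
  have hQBBS : (Aq * (Bq * Bq)) * Q = Q * (T * (S * S)) := by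
    have hQSS : (Bq * Bq) * Q = Q * (S * S) := by
      rw [mul_assoc, ← hQS, ← mul_assoc, ← hQS, mul_assoc]
    rw [mul_assoc Aq (Bq * Bq) Q, hQSS, ← mul_assoc, ← hQT, mul_assoc]
  have hdetABB : ((T * (S * S)) - 1).det = 0 := by
    rw [← conj_sub_one_det hQr hQBBS]; exact hABB1
  have hfacABB : ((T * (S * S)) - 1).det =
      (r' * r' - 1) * ((r - 1) * (t * (s * s) - 1)) := by
    rw [hTmat, hSmat, Matrix.mul_fin_three, Matrix.mul_fin_three, sub_one3, det3_of]; ring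
  have hmain2 : r' * r' = 1 ∨ s = 1 := by
    rw [hfacABB] at hdetABB
    rcases mul_eq_zero.mp hdetABB with h1 | h1
    · left; linarith
    rcases mul_eq_zero.mp h1 with h2 | h2
    · exact absurd (by linarith : r = 1) hr1
    · right
      have hss : t * (s * s) = s := by
        rw [show t * (s * s) = (t * s) * s by ring, hts, one_mul]
      rw [hss] at h2
      linarith
  -- commutation of T and S
  have hTScomm : T * S = S * T := by
    have hQST : (Bq * Aq) * Q = Q * (S * T) := by
      rw [mul_assoc, ← hQT, ← mul_assoc, ← hQS, mul_assoc]
    have h1 : Q * (T * S) = Q * (S * T) := by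
      rw [← hQTS, ← hQST, hcomm]
    calc T * S = (Q⁻¹ * Q) * (T * S) := by rw [hQl, one_mul]
      _ = Q⁻¹ * (Q * (T * S)) := by rw [mul_assoc]
      _ = Q⁻¹ * (Q * (S * T)) := by rw [h1]
      _ = (Q⁻¹ * Q) * (S * T) := by rw [← mul_assoc]
      _ = S * T := by rw [hQl, one_mul]
  -- rule out t = 1 (equivalently s = 1)
  have hts_neg : t = -1 ∧ s = -1 ∧ r = -1 ∧ r' = -1 := by
    by_cases ht1 : t = 1
    · exfalso
      have hs1 : s = 1 := by
        rw [ht1, one_mul] at hts; exact hts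
      have hrneg : r = -1 := by
        rcases hrt with h1 | h1
        · rw [ht1, mul_one] at h1; exact absurd h1 hr1
        · rw [ht1, mul_one] at h1; exact h1
      have hr'neg : r' = -1 := by
        rcases hr's with h1 | h1
        · rw [hs1, mul_one] at h1; exact absurd h1 hr'1
        · rw [hs1, mul_one] at h1; exact h1
      -- extract commutation equations
      have hTS' : T * S = S * T := hTScomm
      rw [hTmat, hSmat, Matrix.mul_fin_three, Matrix.mul_fin_three] at hTS'
      have h02 := congrFun (congrFun hTS' 0) 2
      have h12 := congrFun (congrFun hTS' 1) 2
      simp [hrneg, hr'neg, ht1, hs1] at h02 h12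
      -- h02 : c + a = -a + c  (so a = 0) ; h12 : -d + b = b + d (so d = 0)
      have ha0 : a = 0 := by linarith
      have hd0 : d = 0 := by linarith
      set x : Fin 3 → ℚ := ![c/2, b/2, 1] with hxdef
      have hTx : T *ᵥ x = x := by
        funext i
        rw [hTmat]
        fin_cases i <;>
          simp [Matrix.mulVec, dotProduct, Fin.sum_univ_three, hxdef,
            hrneg, ht1, ha0] <;> ring
      have hSx : S *ᵥ x = x := by
        funext i
        rw [hSmat]
        fin_cases i <;>
          simp [Matrix.mulVec, dotProduct, Fin.sum_univ_three, hxdef,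
            hr'neg, hs1, hd0] <;> ring
      have hx0 : x ≠ 0 := by
        intro h
        have := congrFun h 2
        simp [hxdef] at this
      have hcfix : Q *ᵥ x ≠ 0 := by
        intro h
        apply hx0
        apply hinj
        rw [h, Matrix.mulVec_zero]
      have hA' : Aq *ᵥ (Q *ᵥ x) = Q *ᵥ x := by rw [← keyT, hTx]
      have hB' : Bq *ᵥ (Q *ᵥ x) = Q *ᵥ x := by rw [← keyS, hSx]
      exact hcfix (hfixQ _ hA' hB')
    · -- t ≠ 1 : the good case
      have hs1 : s ≠ 1 := by
        intro h
        rw [h, mul_one] at hts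
        exact ht1 hts
      have hrneg : r = -1 := by
        rcases hmain1 with h1 | h1
        · rcases mul_self_eq_one_iff.mp h1 with h2 | h2
          · exact absurd h2 hr1
          · exact h2
        · exact absurd h1 ht1
      have hr'neg : r' = -1 := by
        rcases hmain2 with h1 | h1
        · rcases mul_self_eq_one_iff.mp h1 with h2 | h2
          · exact absurd h2 hr'1
          · exact h2
        · exact absurd h1 hs1
      have htneg : t = -1 := by
        rcases hrt with h1 | h1
        · rw [hrneg] at h1; linarith
        · rw [hrneg] at h1
          have : t = 1 := by linarith
          exact absurd this ht1
      have hsneg : s = -1 := by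
        rw [htneg] at hts; linarith
      exact ⟨htneg, hsneg, hrneg, hr'neg⟩
  obtain ⟨htneg, hsneg, hrneg, hr'neg⟩ := hts_neg
  -- commutation gives b = 0 and c = 0
  have hTS' : T * S = S * T := hTScomm
  rw [hTmat, hSmat, Matrix.mul_fin_three, Matrix.mul_fin_three] at hTS'
  have h02 := congrFun (congrFun hTS' 0) 2
  have h12 := congrFun (congrFun hTS' 1) 2
  simp [hrneg, hr'neg, htneg, hsneg] at h02 h12
  have hc0 : c = 0 := by linarith
  have hb0 : b = 0 := by linarith
  -- A² = 1 and B² = 1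
  have hTT : T * T = 1 := by
    rw [hTmat, hrneg, htneg, hb0, Matrix.mul_fin_three, Matrix.one_fin_three]
    norm_num
  have hSS : S * S = 1 := by
    rw [hSmat, hr'neg, hsneg, hc0, Matrix.mul_fin_three, Matrix.one_fin_three]
    norm_num
  have hQTT : (Aq * Aq) * Q = Q * (T * T) := by
    rw [mul_assoc, ← hQT, ← mul_assoc, ← hQT, mul_assoc]
  have hA2 : Aq * Aq = 1 := by
    calc Aq * Aq = ((Aq * Aq) * Q) * Q⁻¹ := by
          rw [mul_assoc (Aq * Aq) Q Q⁻¹, hQr, mul_one]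
      _ = (Q * (T * T)) * Q⁻¹ := by rw [hQTT]
      _ = Q * Q⁻¹ := by rw [hTT, mul_one]
      _ = 1 := hQr
  have hQSS : (Bq * Bq) * Q = Q * (S * S) := by
    rw [mul_assoc, ← hQS, ← mul_assoc, ← hQS, mul_assoc]
  have hB2 : Bq * Bq = 1 := by
    calc Bq * Bq = ((Bq * Bq) * Q) * Q⁻¹ := by
          rw [mul_assoc (Bq * Bq) Q Q⁻¹, hQr, mul_one]
      _ = (Q * (S * S)) * Q⁻¹ := by rw [hQSS]
      _ = Q * Q⁻¹ := by rw [hSS, mul_one]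
      _ = 1 := hQr
  refine ⟨hA2, hB2, e, f, Q *ᵥ ![0, -(d/2), 1], he0, hf0, hAe, ?_, hBf, ?_, ?_, ?_, ?_⟩
  · rw [hr', hr'neg]
    exact neg_one_smul ℚ e
  · rw [hr, hrneg]
    exact neg_one_smul ℚ f
  · exact fun x hx => lineA e x hAe hx he0
  · have hSy : S *ᵥ ![0, -(d/2), 1] = -(![0, -(d/2), 1]) := by
      funext i
      rw [hSmat]
      fin_cases i <;>
        simp [Matrix.mulVec, dotProduct, Fin.sum_univ_three,
          hr'neg, hsneg, hc0] <;> ring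
    rw [← keyS, hSy, Matrix.mulVec_neg]
  · intro α β h
    have h1 : Q *ᵥ (α • (Pi.single 0 1 : Fin 3 → ℚ) + β • ![0, -(d/2), 1]) = Q *ᵥ 0 := by
      rw [Matrix.mulVec_add, Matrix.mulVec_smul, Matrix.mulVec_smul, hQ0,
        Matrix.mulVec_zero]
      exact h
    have h2 := hinj _ _ h1
    constructor
    · have := congrFun h2 0
      simpa using this
    · have := congrFun h2 2
      simpa using this


def colMZ (v w u : Fin 3 → ℤ) : Matrix (Fin 3) (Fin 3) ℤ :=
  Matrix.of fun i j => ![v, w, u] j i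

lemma colMZ_mulVec (v w u c : Fin 3 → ℤ) :
    (colMZ v w u) *ᵥ c = c 0 • v + c 1 • w + c 2 • u := by
  funext i
  simp [colMZ, Matrix.mulVec, dotProduct, Fin.sum_univ_three]
  ring

lemma mul_colMZ (X : Matrix (Fin 3) (Fin 3) ℤ) (v w u : Fin 3 → ℤ) :
    X * colMZ v w u = colMZ (X *ᵥ v) (X *ᵥ w) (X *ᵥ u) := by
  funext i j
  fin_cases j <;>
    simp [colMZ, Matrix.mul_apply, Matrix.mulVec, dotProduct, Fin.sum_univ_three, Matrix.vecHead, Matrix.vecTail]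

lemma colMZ_single : colMZ (Pi.single 0 1) (Pi.single 1 1) (Pi.single 2 1) = 1 := by
  funext i j
  fin_cases i <;> fin_cases j <;>
    simp [colMZ, Matrix.one_apply, Pi.single_apply, Matrix.vecHead, Matrix.vecTail]

lemma colMZ_mul_Nmat (u v w : Fin 3 → ℤ) (a b : ℤ) :
    (colMZ u v w) * (Nmat a b) = colMZ u (a • u - v) (b • u - w) := by
  funext i j
  fin_cases j <;>
    simp [colMZ, Nmat, Matrix.mul_apply, Fin.sum_univ_three, Matrix.vecHead, Matrix.vecTail] <;> ring

lemma colMZ_mul_Mmat (u v w : Fin 3 → ℤ) (c d : ℤ) :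
    (colMZ u v w) * (Mmat c d) = colMZ (-u) (-v) (c • u + d • v + w) := by
  funext i j
  fin_cases j <;>
    simp [colMZ, Mmat, Matrix.mul_apply, Fin.sum_univ_three, Matrix.vecHead, Matrix.vecTail] <;> ring

/-- Phase 2: integral normal form. -/
lemma phase2 (A B : Matrix (Fin 3) (Fin 3) ℤ)
    (hA2 : A * A = 1) (hB2 : B * B = 1)
    (hdep : ∀ x y : Fin 3 → ℤ, A *ᵥ x = x → A *ᵥ y = y →
      ∃ p q : ℤ, ¬(p = 0 ∧ q = 0) ∧ p • x = q • y)
    (hBfix : ∀ x : Fin 3 → ℤ, A *ᵥ x = x → B *ᵥ x = -x)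
    (k0 : Fin 3 → ℤ) (hk00 : k0 ≠ 0) (hk0 : A *ᵥ k0 = k0)
    (f0 : Fin 3 → ℤ) (hf00 : f0 ≠ 0) (hf0 : B *ᵥ f0 = f0)
    (k1 k2 : Fin 3 → ℤ) (hk1 : B *ᵥ k1 = -k1) (hk2 : B *ᵥ k2 = -k2) (hk10 : k1 ≠ 0)
    (hindep : ∀ p q : ℤ, p • k1 = q • k2 → p = 0 ∧ q = 0) :
    ∃ Pm Pinv : Matrix (Fin 3) (Fin 3) ℤ, Pm * Pinv = 1 ∧ Pinv * Pm = 1 ∧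
      ∃ a b c d : ℤ, A * Pm = Pm * Nmat a b ∧ B * Pm = Pm * Mmat c d := by
  classical
  -- the submodule of A-fixed vectors
  set Ka : Submodule ℤ (Fin 3 → ℤ) := LinearMap.ker ((A - 1).mulVecLin) with hKadef
  have hKa_mem : ∀ x, x ∈ Ka ↔ A *ᵥ x = x := by
    intro x
    rw [hKadef, LinearMap.mem_ker, Matrix.mulVecLin_apply, Matrix.sub_mulVec,
      Matrix.one_mulVec, sub_eq_zero]
  set K : Submodule ℤ (Fin 3 → ℤ) := LinearMap.ker ((B + 1).mulVecLin) with hKdef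
  have hK_mem : ∀ x, x ∈ K ↔ B *ᵥ x = -x := by
    intro x
    rw [hKdef, LinearMap.mem_ker, Matrix.mulVecLin_apply, Matrix.add_mulVec,
      Matrix.one_mulVec, add_eq_zero_iff_eq_neg]
  -- Ka is free of rank 1: get a generator u
  obtain ⟨n₁, snf1⟩ := Submodule.smithNormalForm (Pi.basisFun ℤ (Fin 3)) Ka
  have hukey : ∃ u : Fin 3 → ℤ, u ≠ 0 ∧ A *ᵥ u = u ∧
      (∀ x : Fin 3 → ℤ, A *ᵥ x = x → ∃ m : ℤ, x = m • u) := by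
    cases n₁ with
    | zero =>
      exfalso
      set bKa := snf1.bN
      set xe : Ka := ⟨k0, (hKa_mem k0).mpr hk0⟩ with hxe
      have h1 := bKa.sum_repr xe
      rw [Finset.univ_eq_empty, Finset.sum_empty] at h1
      apply hk00
      have := congrArg Subtype.val h1
      simpa [hxe] using this.symm
    | succ n =>
      cases n with
      | zero =>
        set bKa := snf1.bN
        refine ⟨(bKa 0 : Fin 3 → ℤ), ?_, (hKa_mem _).mp (bKa 0).2, ?_⟩
        · intro h
          have : bKa 0 = 0 := by
            apply Subtype.ext
            simpa using h
          exact Module.Basis.ne_zero bKa 0 this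
        · intro x hx
          set xe : Ka := ⟨x, (hKa_mem x).mpr hx⟩ with hxe
          refine ⟨bKa.repr xe 0, ?_⟩
          have h1 := bKa.sum_repr xe
          rw [Fin.sum_univ_one] at h1
          have := congrArg Subtype.val h1
          simpa using this.symm
      | succ m =>
        exfalso
        set bKa := snf1.bN
        have h0 : A *ᵥ ((bKa 0 : Fin 3 → ℤ)) = (bKa 0 : Fin 3 → ℤ) :=
          (hKa_mem _).mp (bKa 0).2
        have h1 : A *ᵥ ((bKa 1 : Fin 3 → ℤ)) = (bKa 1 : Fin 3 → ℤ) :=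
          (hKa_mem _).mp (bKa 1).2
        obtain ⟨p, q, hpq, hrel⟩ := hdep _ _ h0 h1
        have hrel' : p • bKa 0 = q • bKa 1 := by
          apply Subtype.ext
          simpa using hrel
        have hc := congrArg bKa.repr hrel'
        rw [_root_.map_smul, _root_.map_smul, Module.Basis.repr_self, Module.Basis.repr_self] at hc
        have h00 := DFunLike.congr_fun hc 0
        have h11 := DFunLike.congr_fun hc 1
        have hne : (0 : Fin (m + 2)) ≠ 1 := by simp [Fin.ext_iff]
        rw [Finsupp.smul_apply, Finsupp.smul_apply, Finsupp.single_eq_same,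
          Finsupp.single_eq_of_ne hne] at h00
        rw [Finsupp.smul_apply, Finsupp.smul_apply, Finsupp.single_eq_same,
          Finsupp.single_eq_of_ne hne.symm] at h11
        simp at h00 h11
        exact hpq ⟨h00, h11.symm⟩
  obtain ⟨u, hu0, huA, hKa_cyc⟩ := hukey
  have huB : B *ᵥ u = -u := hBfix u huA
  have huK : u ∈ K := (hK_mem u).mpr huB
  -- K is free of rank 2
  obtain ⟨n₂, snf2⟩ := Submodule.smithNormalForm (Pi.basisFun ℤ (Fin 3)) K
  obtain ⟨bM, bN, fι, aco, hsnf⟩ := snf2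
  have hn₂ : n₂ ≤ 3 := by
    have := Fintype.card_le_of_embedding fι
    simpa using this
  -- generators of K among the ambient basis
  have hgen : ∀ i : Fin n₂, B *ᵥ (bM (fι i)) = -(bM (fι i)) := by
    intro i
    have hmem : ((bN i : Fin 3 → ℤ)) ∈ K := (bN i).2
    rw [hsnf i] at hmem
    have hBi := (hK_mem _).mp hmem
    have ha0 : aco i ≠ 0 := by
      intro h
      have : (bN i : Fin 3 → ℤ) = 0 := by rw [hsnf i, h, zero_smul]
      exact Module.Basis.ne_zero bN i (Subtype.ext (by simpa using this))
    rw [Matrix.mulVec_smul, ← smul_neg] at hBi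
    exact smul_right_injective _ ha0 hBi
  -- case analysis on the rank of K
  cases n₂ with
  | zero =>
    exfalso
    set xe : K := ⟨k1, (hK_mem k1).mpr hk1⟩ with hxe
    have h1 := bN.sum_repr xe
    rw [Finset.univ_eq_empty, Finset.sum_empty] at h1
    apply hk10
    have := congrArg Subtype.val h1
    simpa [hxe] using this.symm
  | succ n => cases n with
    | zero =>
      exfalso
      -- K is cyclic, contradicting independence of k1 k2
      have hcyc : ∀ x : Fin 3 → ℤ, x ∈ K → ∃ m : ℤ, x = m • ((bN 0 : K) : Fin 3 → ℤ) := by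
        intro x hx
        set xe : K := ⟨x, hx⟩ with hxe
        refine ⟨bN.repr xe 0, ?_⟩
        have h1 := bN.sum_repr xe
        rw [Fin.sum_univ_one] at h1
        have := congrArg Subtype.val h1
        simpa using this.symm
      obtain ⟨p, hp⟩ := hcyc k1 ((hK_mem k1).mpr hk1)
      obtain ⟨q, hq⟩ := hcyc k2 ((hK_mem k2).mpr hk2)
      have hrel : q • k1 = p • k2 := by
        rw [hp, hq, smul_smul, smul_smul, mul_comm]
      obtain ⟨hq0, hp0⟩ := hindep q p hrel
      apply hk10
      rw [hp, hp0, zero_smul]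
    | succ m => cases m with
      | succ l =>
        exfalso
        cases l with
        | succ o => exact absurd hn₂ (by omega)
        | zero =>
          -- n₂ = 3 : B = -1 everywhere, contradicting f0
          have hsurj : Function.Surjective fι :=
            ((Finite.injective_iff_bijective).mp fι.injective).2
          have hallK : ∀ x : Fin 3 → ℤ, x ∈ K := by
            intro x
            have hx : x ∈ Submodule.span ℤ (Set.range ⇑bM) := by
              rw [Module.Basis.span_eq]; exact Submodule.mem_top
            refine Submodule.span_le.mpr ?_ hx
            rintro yy ⟨jdx, rfl⟩
            obtain ⟨i, rfl⟩ := hsurj jdx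
            exact (hK_mem _).mpr (hgen i)
          have hB0 := (hK_mem f0).mp (hallK f0)
          rw [hf0] at hB0
          apply hf00
          funext i
          simp only [Pi.zero_apply]
          have h7 := congrFun hB0 i
          simp only [Pi.neg_apply] at h7
          omega
      | zero =>
        -- MAIN CASE : n₂ = 2
        have hx1 : B *ᵥ (bM (fι 0)) = -(bM (fι 0)) := hgen 0
        have hx2 : B *ᵥ (bM (fι 1)) = -(bM (fι 1)) := hgen 1
        set x1 := bM (fι 0) with hx1def
        set x2 := bM (fι 1) with hx2def
        have hKspan : ∀ x : Fin 3 → ℤ, x ∈ K → ∃ p q : ℤ, x = p • x1 + q • x2 := by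
          intro x hx
          set xe : K := ⟨x, hx⟩ with hxe
          refine ⟨bN.repr xe 0 * aco 0, bN.repr xe 1 * aco 1, ?_⟩
          have h1 := bN.sum_repr xe
          rw [Fin.sum_univ_two] at h1
          have h2 := congrArg Subtype.val h1
          rw [Submodule.coe_add, SetLike.val_smul, SetLike.val_smul, hsnf 0, hsnf 1] at h2
          calc x = bN.repr xe 0 • (aco 0 • x1) + bN.repr xe 1 • (aco 1 • x2) := h2.symm
            _ = (bN.repr xe 0 * aco 0) • x1 + (bN.repr xe 1 * aco 1) • x2 := by
                rw [smul_smul, smul_smul]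
        obtain ⟨c0, c1, hu_span⟩ := hKspan u huK
        set gn : ℕ := Int.gcd c0 c1 with hgndef
        have hgdvd0 : ((gn : ℤ)) ∣ c0 := Int.gcd_dvd_left _ _
        have hgdvd1 : ((gn : ℤ)) ∣ c1 := Int.gcd_dvd_right _ _
        have hgn0 : (gn : ℤ) ≠ 0 := by
          intro h
          have h0 : gn = 0 := by exact_mod_cast h
          rw [hgndef] at h0
          obtain ⟨hc0, hc1⟩ := Int.gcd_eq_zero_iff.mp h0
          apply hu0
          rw [hu_span, hc0, hc1, zero_smul, zero_smul, add_zero]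
        set y := (c0 / (gn:ℤ)) • x1 + (c1 / (gn:ℤ)) • x2 with hydef
        have hgy : (gn:ℤ) • y = u := by
          rw [hydef, hu_span, smul_add, smul_smul, smul_smul,
            Int.mul_ediv_cancel' hgdvd0, Int.mul_ediv_cancel' hgdvd1]
        have hyA : A *ᵥ y = y := by
          have h3 : (gn:ℤ) • (A *ᵥ y) = (gn:ℤ) • y := by
            rw [← Matrix.mulVec_smul, hgy, huA, ← hgy]
          exact smul_right_injective _ hgn0 h3
        obtain ⟨mm, hmm⟩ := hKa_cyc y hyA
        have hu_mm : u = ((gn:ℤ) * mm) • u := by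
          conv_lhs => rw [← hgy, hmm, smul_smul]
        have hgm1 : (gn:ℤ) * mm = 1 := by
          have h4 : (1 - (gn:ℤ) * mm) • u = 0 := by
            rw [sub_smul, one_smul, ← hu_mm, sub_self]
          rcases smul_eq_zero.mp h4 with h5 | h5
          · linarith
          · exact absurd h5 hu0
        have hgcd1 : Int.gcd c0 c1 = 1 := by
          rcases Int.mul_eq_one_iff_eq_one_or_neg_one.mp hgm1 with ⟨h6, _⟩ | ⟨h6, _⟩
          · rw [hgndef] at h6
            exact_mod_cast h6
          · exfalso
            omega
        obtain ⟨sc, tc, hst⟩ := Int.isCoprime_iff_gcd_eq_one.mpr hgcd1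
        set v := (-tc) • x1 + sc • x2 with hvdef
        have hvB : B *ᵥ v = -v := by
          rw [hvdef, Matrix.mulVec_add, Matrix.mulVec_smul, Matrix.mulVec_smul, hx1, hx2]
          module
        have hx1uv : x1 = sc • u - c1 • v := by
          rw [hu_span, hvdef]
          match_scalars <;>
            first
            | ring1
            | linear_combination hst
            | linear_combination -hst
            | linear_combination 2 * hst
            | linear_combination -2 * hst
        have hx2uv : x2 = tc • u + c0 • v := by
          rw [hu_span, hvdef]
          match_scalars <;>
            first
            | ring1
            | linear_combination hst
            | linear_combination -hst
            | linear_combination 2 * hst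
            | linear_combination -2 * hst
        have hne01 : fι 0 ≠ fι 1 := fun h => absurd (fι.injective h) (by decide)
        have hjex : ∃ j : Fin 3, fι 0 ≠ j ∧ fι 1 ≠ j := by
          by_contra hcon
          push_neg at hcon
          have h3 : ∀ j, fι 0 = j ∨ fι 1 = j := fun j => by
            by_cases h : fι 0 = j
            · exact Or.inl h
            · exact Or.inr (hcon j h)
          rcases h3 0 with ha | ha <;> rcases h3 1 with hb | hb <;> rcases h3 2 with hc | hc <;>
            first
            | exact absurd (ha.symm.trans hb) (by decide)
            | exact absurd (ha.symm.trans hc) (by decide)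
            | exact absurd (hb.symm.trans hc) (by decide)
        obtain ⟨j, hj0, hj1⟩ := hjex
        set w := bM j with hwdef
        have htri : ∀ idx : Fin 3, idx = fι 0 ∨ idx = fι 1 ∨ idx = j := by
          intro idx
          by_contra hcon
          push_neg at hcon
          obtain ⟨d1, d2, d3⟩ := hcon
          have hcard := Finset.card_le_univ ({idx, fι 0, fι 1, j} : Finset (Fin 3))
          rw [Finset.card_insert_of_notMem (by simp [d1, d2, d3]),
              Finset.card_insert_of_notMem (by simp [hne01, hj0]),
              Finset.card_insert_of_notMem (by simp [hj1]),
              Finset.card_singleton] at hcard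
          simp [Finset.card_univ] at hcard
        have hspan3 : ∀ x : Fin 3 → ℤ, ∃ α β γ : ℤ, x = α • u + β • v + γ • w := by
          intro x
          have hexpr : ∀ idx : Fin 3, ∃ α β γ : ℤ, bM idx = α • u + β • v + γ • w := by
            intro idx
            rcases htri idx with h | h | h
            · refine ⟨sc, -c1, 0, ?_⟩
              rw [h, ← hx1def, hx1uv]
              module
            · refine ⟨tc, c0, 0, ?_⟩
              rw [h, ← hx2def, hx2uv]
              module
            · refine ⟨0, 0, 1, ?_⟩
              rw [h, ← hwdef]
              module
          obtain ⟨α₀, β₀, γ₀, h₀⟩ := hexpr 0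
          obtain ⟨α₁, β₁, γ₁, h₁⟩ := hexpr 1
          obtain ⟨α₂, β₂, γ₂, h₂⟩ := hexpr 2
          have hx := bM.sum_repr x
          rw [Fin.sum_univ_three] at hx
          refine ⟨bM.repr x 0 * α₀ + bM.repr x 1 * α₁ + bM.repr x 2 * α₂,
                  bM.repr x 0 * β₀ + bM.repr x 1 * β₁ + bM.repr x 2 * β₂,
                  bM.repr x 0 * γ₀ + bM.repr x 1 * γ₁ + bM.repr x 2 * γ₂, ?_⟩
          conv_lhs => rw [← hx, h₀, h₁, h₂]
          module
        obtain ⟨a0, b0, g0, h0⟩ := hspan3 (Pi.single 0 1)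
        obtain ⟨a1, b1, g1, h1⟩ := hspan3 (Pi.single 1 1)
        obtain ⟨a2, b2, g2, h2⟩ := hspan3 (Pi.single 2 1)
        set Pm := colMZ u v w with hPmdef
        set Pinv := colMZ ![a0, b0, g0] ![a1, b1, g1] ![a2, b2, g2] with hPinvdef
        have hcol : ∀ (α β γ : ℤ), Pm *ᵥ ![α, β, γ] = α • u + β • v + γ • w := by
          intro α β γ
          rw [hPmdef, colMZ_mulVec]
          simp
        have hPmPinv : Pm * Pinv = 1 := by
          rw [hPinvdef, mul_colMZ, hcol, hcol, hcol, ← h0, ← h1, ← h2, colMZ_single]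
        have hPinvPm : Pinv * Pm = 1 := mul_eq_one_comm.mp hPmPinv
        have hA1mul : A * (A + 1) = A + 1 := by
          rw [mul_add, hA2, mul_one, add_comm]
        have haex : ∀ x : Fin 3 → ℤ, ∃ m : ℤ, A *ᵥ x = m • u - x := by
          intro x
          have hfix4 : A *ᵥ ((A + 1) *ᵥ x) = (A + 1) *ᵥ x := by
            rw [Matrix.mulVec_mulVec, hA1mul]
          obtain ⟨m, hm⟩ := hKa_cyc _ hfix4
          refine ⟨m, ?_⟩
          rw [Matrix.add_mulVec, Matrix.one_mulVec] at hm
          linear_combination (norm := module) hm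
        obtain ⟨aInt, hav⟩ := haex v
        obtain ⟨bInt, haw⟩ := haex w
        have hBsub : B * (B - 1) = -(B - 1) := by
          rw [mul_sub, hB2, mul_one, neg_sub]
        have hBw_mem : (B - 1) *ᵥ w ∈ K := by
          rw [hK_mem, Matrix.mulVec_mulVec, hBsub, Matrix.neg_mulVec]
        obtain ⟨pB, qB, hpq⟩ := hKspan _ hBw_mem
        have hBw : B *ᵥ w = (pB * sc + qB * tc) • u + ((-pB) * c1 + qB * c0) • v + w := by
          have h5 : B *ᵥ w - w = pB • x1 + qB • x2 := by
            rw [← hpq, Matrix.sub_mulVec, Matrix.one_mulVec]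
          rw [hx1uv, hx2uv] at h5
          linear_combination (norm := module) h5
        refine ⟨Pm, Pinv, hPmPinv, hPinvPm, aInt, bInt, pB * sc + qB * tc,
          (-pB) * c1 + qB * c0, ?_, ?_⟩
        · rw [hPmdef, mul_colMZ, colMZ_mul_Nmat, huA, hav, haw]
        · rw [hPmdef, mul_colMZ, colMZ_mul_Mmat, huB, hvB, hBw]



lemma castM_mul (X Y : Matrix (Fin 3) (Fin 3) ℤ) : castM (X * Y) = castM X * castM Y :=
  Matrix.map_mul (f := Int.castRingHom ℚ)

lemma castM_one : castM 1 = 1 :=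
  Matrix.map_one _ (by simp) (by simp)

lemma castM_sub_one (X : Matrix (Fin 3) (Fin 3) ℤ) : castM (X - 1) = castM X - 1 := by
  unfold castM
  rw [Matrix.map_sub _ (by push_cast; exact fun _ _ => rfl)]
  congr 1
  exact Matrix.map_one _ (by simp) (by simp)

lemma castM_det (X : Matrix (Fin 3) (Fin 3) ℤ) : (castM X).det = (X.det : ℚ) :=
  (RingHom.map_det (Int.castRingHom ℚ) X).symm

lemma castM_inj {X Y : Matrix (Fin 3) (Fin 3) ℤ} (h : castM X = castM Y) : X = Y := by
  funext i j
  have := congrFun (congrFun h i) j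
  simpa [castM] using this

lemma cv_smul (m : ℤ) (x : Fin 3 → ℤ) : cv (m • x) = (m : ℚ) • cv x := by
  funext i
  simp [cv]

lemma cv_neg (x : Fin 3 → ℤ) : cv (-x) = -cv x := by
  funext i
  simp [cv]

lemma cv_inj {x y : Fin 3 → ℤ} (h : cv x = cv y) : x = y := by
  funext i
  have := congrFun h i
  simpa [cv] using this


end NFAux

open NFAux in
theorem normal_form_commuting_pair
    (N M : GL (Fin 3) ℤ)
    (hcomm : N * M = M * N)
    (hspec : ∀ n m : ℤ, (((N ^ n * M ^ m : GL (Fin 3) ℤ) :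
      Matrix (Fin 3) (Fin 3) ℤ) - 1).det = 0)
    (hfix : ∀ k : Fin 3 → ℤ,
      (∀ n m : ℤ, ((N ^ n * M ^ m : GL (Fin 3) ℤ) :
        Matrix (Fin 3) (Fin 3) ℤ).mulVec k = k) → k = 0) :
    ∃ (P : GL (Fin 3) ℤ) (a b c d : ℤ),
      ((P⁻¹ * N * P : GL (Fin 3) ℤ) : Matrix (Fin 3) (Fin 3) ℤ) = Nmat a b ∧
      ((P⁻¹ * M * P : GL (Fin 3) ℤ) : Matrix (Fin 3) (Fin 3) ℤ) = Mmat c d := by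
  set A : Matrix (Fin 3) (Fin 3) ℤ := (N : Matrix (Fin 3) (Fin 3) ℤ) with hAdef
  set B : Matrix (Fin 3) (Fin 3) ℤ := (M : Matrix (Fin 3) (Fin 3) ℤ) with hBdef
  have hABcomm : A * B = B * A := by
    rw [hAdef, hBdef, ← Units.val_mul, ← Units.val_mul, hcomm]
  have hdetA : A.det = 1 ∨ A.det = -1 := by
    have h1 : A * ((N⁻¹ : GL (Fin 3) ℤ) : Matrix (Fin 3) (Fin 3) ℤ) = 1 := N.mul_inv
    have h2 : A.det * (((N⁻¹ : GL (Fin 3) ℤ) : Matrix (Fin 3) (Fin 3) ℤ)).det = 1 := by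
      rw [← Matrix.det_mul, h1, Matrix.det_one]
    exact Int.isUnit_iff.mp (IsUnit.of_mul_eq_one _ h2)
  have hdetB : B.det = 1 ∨ B.det = -1 := by
    have h1 : B * ((M⁻¹ : GL (Fin 3) ℤ) : Matrix (Fin 3) (Fin 3) ℤ) = 1 := M.mul_inv
    have h2 : B.det * (((M⁻¹ : GL (Fin 3) ℤ) : Matrix (Fin 3) (Fin 3) ℤ)).det = 1 := by
      rw [← Matrix.det_mul, h1, Matrix.det_one]
    exact Int.isUnit_iff.mp (IsUnit.of_mul_eq_one _ h2)
  have hzpow2 : ∀ U : GL (Fin 3) ℤ, U ^ (2:ℤ) = U * U := by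
    intro U
    rw [show (2:ℤ) = 1 + 1 from rfl, _root_.zpow_add, zpow_one]
  have s10 : (A - 1).det = 0 := by
    have h := hspec 1 0
    rw [zpow_one, zpow_zero, mul_one] at h
    exact h
  have s01 : (B - 1).det = 0 := by
    have h := hspec 0 1
    rw [zpow_one, zpow_zero, one_mul] at h
    exact h
  have s11 : (A * B - 1).det = 0 := by
    have h := hspec 1 1
    rw [zpow_one, zpow_one, Units.val_mul] at h
    exact h
  have s21 : (A * (A * B) - 1).det = 0 := by
    have h := hspec 2 1
    rw [hzpow2, zpow_one, Units.val_mul, Units.val_mul, mul_assoc] at h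
    exact h
  have s12 : (A * (B * B) - 1).det = 0 := by
    have h := hspec 1 2
    rw [hzpow2, zpow_one, Units.val_mul, Units.val_mul] at h
    exact h
  have hfixZ : ∀ k : Fin 3 → ℤ, A *ᵥ k = k → B *ᵥ k = k → k = 0 := by
    intro k hkA hkB
    apply hfix
    have key : ∀ (U : GL (Fin 3) ℤ), ((U : Matrix (Fin 3) (Fin 3) ℤ)) *ᵥ k = k →
        ∀ n : ℤ, (((U ^ n : GL (Fin 3) ℤ) : Matrix (Fin 3) (Fin 3) ℤ)) *ᵥ k = k := by
      intro U hU n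
      have hUinv : (((U⁻¹ : GL (Fin 3) ℤ) : Matrix (Fin 3) (Fin 3) ℤ)) *ᵥ k = k := by
        conv_lhs => rw [← hU]
        rw [Matrix.mulVec_mulVec, ← Units.val_mul, inv_mul_cancel U, Units.val_one,
          Matrix.one_mulVec]
      induction n using Int.induction_on with
      | zero => rw [zpow_zero, Units.val_one, Matrix.one_mulVec]
      | succ i ih =>
        rw [_root_.zpow_add_one, Units.val_mul, ← Matrix.mulVec_mulVec, hU, ih]
      | pred i ih =>
        rw [_root_.zpow_sub_one, Units.val_mul, ← Matrix.mulVec_mulVec, hUinv, ih]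
    intro n m
    rw [Units.val_mul, ← Matrix.mulVec_mulVec, key M hkB m, key N hkA n]
  -- pass to ℚ
  set Aq := castM A with hAqdef
  set Bq := castM B with hBqdef
  have hfixQ : ∀ x : Fin 3 → ℚ, Aq *ᵥ x = x → Bq *ᵥ x = x → x = 0 := by
    intro x hxA hxB
    by_cases hx : x = 0
    · exact hx
    exfalso
    obtain ⟨k, q, hq, hk0, hkv⟩ := exists_cv_smul' x hx
    apply hk0
    apply hfixZ
    · apply cv_inj
      rw [← mulVec_cv, hkv, Matrix.mulVec_smul, hxA]
    · apply cv_inj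
      rw [← mulVec_cv, hkv, Matrix.mulVec_smul, hxB]
  have hcommQ : Aq * Bq = Bq * Aq := by
    rw [hAqdef, hBqdef, ← castM_mul, ← castM_mul, hABcomm]
  have hdetAq : Aq.det = 1 ∨ Aq.det = -1 := by
    rw [hAqdef, castM_det]
    rcases hdetA with h | h <;> rw [h] <;> norm_num
  have hdetBq : Bq.det = 1 ∨ Bq.det = -1 := by
    rw [hBqdef, castM_det]
    rcases hdetB with h | h <;> rw [h] <;> norm_num
  have hA1q : (Aq - 1).det = 0 := by
    rw [hAqdef, ← castM_sub_one, castM_det, s10, Int.cast_zero]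
  have hB1q : (Bq - 1).det = 0 := by
    rw [hBqdef, ← castM_sub_one, castM_det, s01, Int.cast_zero]
  have hAB1q : (Aq * Bq - 1).det = 0 := by
    rw [hAqdef, hBqdef, ← castM_mul, ← castM_sub_one, castM_det, s11, Int.cast_zero]
  have hAAB1q : (Aq * (Aq * Bq) - 1).det = 0 := by
    rw [hAqdef, hBqdef, ← castM_mul, ← castM_mul, ← castM_sub_one, castM_det, s21,
      Int.cast_zero]
  have hABB1q : (Aq * (Bq * Bq) - 1).det = 0 := by
    rw [hAqdef, hBqdef, ← castM_mul, ← castM_mul, ← castM_sub_one, castM_det, s12,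
      Int.cast_zero]
  obtain ⟨hA2q, hB2q, e, f, hvec, he0, hf0, hAe, hBe, hBf, hAf, hline, hBh, hindQ⟩ :=
    phase1 Aq Bq hcommQ hdetAq hdetBq hA1q hB1q hAB1q hAAB1q hABB1q hfixQ
  -- back to ℤ
  have hA2 : A * A = 1 := by
    apply castM_inj
    rw [castM_mul, castM_one, ← hAqdef]
    exact hA2q
  have hB2 : B * B = 1 := by
    apply castM_inj
    rw [castM_mul, castM_one, ← hBqdef]
    exact hB2q
  have hdepZ : ∀ x y : Fin 3 → ℤ, A *ᵥ x = x → A *ᵥ y = y →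
      ∃ p q : ℤ, ¬(p = 0 ∧ q = 0) ∧ p • x = q • y := by
    intro x y hx hy
    by_cases hx0 : x = 0
    · refine ⟨1, 0, by simp, by simp [hx0]⟩
    obtain ⟨ρ, hρ⟩ := hline (cv x) (by rw [hAqdef, mulVec_cv, hx])
    obtain ⟨ρ', hρ'⟩ := hline (cv y) (by rw [hAqdef, mulVec_cv, hy])
    have hρ0 : ρ ≠ 0 := by
      intro h
      rw [h, zero_smul] at hρ
      exact hx0 (cv_eq_zero hρ)
    refine ⟨ρ'.num * (ρ.den : ℤ), ρ.num * (ρ'.den : ℤ), ?_, ?_⟩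
    · rintro ⟨-, h2⟩
      rcases mul_eq_zero.mp h2 with h3 | h3
      · rw [Rat.num_eq_zero] at h3
        exact hρ0 h3
      · exact absurd h3 (by exact_mod_cast (Rat.den_ne_zero ρ'))
    · apply cv_inj
      rw [cv_smul, cv_smul, hρ, hρ', smul_smul, smul_smul]
      congr 1
      push_cast
      rw [num_eq, num_eq]
      ring
  have hBfixZ : ∀ x : Fin 3 → ℤ, A *ᵥ x = x → B *ᵥ x = -x := by
    intro x hx
    obtain ⟨ρ, hρ⟩ := hline (cv x) (by rw [hAqdef, mulVec_cv, hx])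
    apply cv_inj
    rw [← mulVec_cv, ← hBqdef, hρ, Matrix.mulVec_smul, hBe, cv_neg, hρ, smul_neg]
  obtain ⟨k0, q0, hq0, hk00, hk0v⟩ := exists_cv_smul' e he0
  have hk0A : A *ᵥ k0 = k0 := by
    apply cv_inj
    rw [← mulVec_cv, ← hAqdef, hk0v, Matrix.mulVec_smul, hAe]
  obtain ⟨f0, qf, hqf, hf00, hf0v⟩ := exists_cv_smul' f hf0
  have hf0B : B *ᵥ f0 = f0 := by
    apply cv_inj
    rw [← mulVec_cv, ← hBqdef, hf0v, Matrix.mulVec_smul, hBf]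
  have hk1B : B *ᵥ k0 = -k0 := hBfixZ k0 hk0A
  -- second vector in ker(B+1)
  have hh0 : hvec ≠ 0 := by
    intro h
    have h1 := hindQ 0 1 (by rw [h, zero_smul, one_smul, zero_add])
    exact one_ne_zero h1.2
  obtain ⟨k2, q2, hq2, hk20, hk2v⟩ := exists_cv_smul' hvec hh0
  have hk2B : B *ᵥ k2 = -k2 := by
    apply cv_inj
    rw [← mulVec_cv, ← hBqdef, hk2v, Matrix.mulVec_smul, hBh, cv_neg, hk2v, smul_neg]
  have hindepZ : ∀ p q : ℤ, p • k0 = q • k2 → p = 0 ∧ q = 0 := by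
    intro p q hpq
    have h1 : (p : ℚ) • cv k0 = (q : ℚ) • cv k2 := by
      rw [← cv_smul, ← cv_smul, hpq]
    rw [hk0v, hk2v, smul_smul, smul_smul] at h1
    have h2 : ((p:ℚ) * q0) • e + (-((q:ℚ) * q2)) • hvec = 0 := by
      rw [neg_smul, h1]
      abel
    obtain ⟨h3, h4⟩ := hindQ _ _ h2
    constructor
    · rcases mul_eq_zero.mp h3 with h5 | h5
      · exact_mod_cast h5
      · exact absurd h5 hq0
    · have h6 : (q:ℚ) * q2 = 0 := by linarith [neg_eq_zero.mp h4]
      rcases mul_eq_zero.mp h6 with h5 | h5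
      · exact_mod_cast h5
      · exact absurd h5 hq2
  obtain ⟨Pm, Pinv, hPP, hPP', aI, bI, cI, dI, hAP, hBP⟩ :=
    phase2 A B hA2 hB2 hdepZ hBfixZ k0 hk00 hk0A f0 hf00 hf0B k0 k2 hk1B hk2B hk00 hindepZ
  refine ⟨⟨Pm, Pinv, hPP, hPP'⟩, aI, bI, cI, dI, ?_, ?_⟩
  · have hPuinv : (((⟨Pm, Pinv, hPP, hPP'⟩ : (Matrix (Fin 3) (Fin 3) ℤ)ˣ)⁻¹ :
        GL (Fin 3) ℤ) : Matrix (Fin 3) (Fin 3) ℤ) = Pinv := rfl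
    rw [Units.val_mul, Units.val_mul, hPuinv, mul_assoc]
    show Pinv * (A * Pm) = Nmat aI bI
    rw [hAP, ← mul_assoc, hPP', one_mul]
  · have hPuinv : (((⟨Pm, Pinv, hPP, hPP'⟩ : (Matrix (Fin 3) (Fin 3) ℤ)ˣ)⁻¹ :
        GL (Fin 3) ℤ) : Matrix (Fin 3) (Fin 3) ℤ) = Pinv := rfl
    rw [Units.val_mul, Units.val_mul, hPuinv, mul_assoc]
    show Pinv * (B * Pm) = Mmat cI dI
    rw [hBP, ← mul_assoc, hPP', one_mul]
end

section
/- Let N and M be elements of GL(3,ℤ) such that (i) N·M = M·N, (ii) 1 is an eigenvalue of N^n·M^m for every (n,m) ∈ ℤ², and (iii) the only k ∈ ℤ³ satisfying N^n·M^m·k = k for all (n,m) ∈ ℤ² is k = 0. Then N² = I, M² = I, N ≠ I, M ≠ I, N ≠ M, and the subgroup of GL(3,ℤ) generated by N and M is isomorphic to the Klein four-group ℤ/2 × ℤ/2. -/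
open Matrix Module Submodule

private def powHom2 {G : Type*} [Group G] (g : G) (hg : g ^ 2 = 1) :
    Multiplicative (ZMod 2) →* G where
  toFun x := g ^ (Multiplicative.toAdd x).val
  map_one' := by
    show g ^ (Multiplicative.toAdd (1 : Multiplicative (ZMod 2))).val = 1
    norm_num [show (Multiplicative.toAdd (1 : Multiplicative (ZMod 2))).val = 0 from rfl]
  map_mul' x y := by
    have h : ∀ z : ZMod 2, z = 0 ∨ z = 1 := by decide
    show g ^ (Multiplicative.toAdd x + Multiplicative.toAdd y).val
        = g ^ (Multiplicative.toAdd x).val * g ^ (Multiplicative.toAdd y).val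
    rcases h (Multiplicative.toAdd x) with hx | hx <;>
      rcases h (Multiplicative.toAdd y) with hy | hy <;>
      rw [hx, hy] <;>
      norm_num [show ((1:ZMod 2)+1).val = 0 by decide, show ((2:ZMod 2)).val = 0 by decide,
        show ((0:ZMod 2)+0).val = 0 by decide, show ((0:ZMod 2)+1).val = 1 by decide,
        show ((1:ZMod 2)+0).val = 1 by decide,
        show ((0:ZMod 2)).val = 0 by decide, show ((1:ZMod 2)).val = 1 by decide]
    all_goals (rw [← hg]; exact pow_two g)

lemma klein_iso {G : Type*} [Group G] (N M : G) (hc : N * M = M * N)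
    (hN : N ^ 2 = 1) (hM : M ^ 2 = 1) (hN1 : N ≠ 1) (hM1 : M ≠ 1) (hNM : N ≠ M) :
    Nonempty (↥(Subgroup.closure {N, M} : Subgroup G) ≃*
      Multiplicative (ZMod 2) × Multiplicative (ZMod 2)) := by
  have hcomm : ∀ x y, Commute ((powHom2 N hN) x) ((powHom2 M hM) y) := by
    intro x y
    show Commute (N ^ (Multiplicative.toAdd x).val) (M ^ (Multiplicative.toAdd y).val)
    exact Commute.pow_pow hc _ _
  set f := MonoidHom.noncommCoprod (powHom2 N hN) (powHom2 M hM) hcomm with hf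
  have happ : ∀ x y : Multiplicative (ZMod 2),
      f (x, y) = N ^ (Multiplicative.toAdd x).val * M ^ (Multiplicative.toAdd y).val := by
    intro x y
    show N ^ (Multiplicative.toAdd x).val * M ^ (Multiplicative.toAdd y).val = _
    rfl
  have hMinv : M⁻¹ = M := by
    rw [← mul_left_cancel_iff (a := M), mul_inv_cancel, ← pow_two, hM]
  have hinj : Function.Injective f := by
    rw [injective_iff_map_eq_one]
    rintro ⟨x, y⟩ hxy
    have h : ∀ z : ZMod 2, z = 0 ∨ z = 1 := by decide
    have hx := h (Multiplicative.toAdd x)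
    have hy := h (Multiplicative.toAdd y)
    have hx' : ∀ z : Multiplicative (ZMod 2), Multiplicative.toAdd z = 0 → z = 1 := by
      intro z hz
      exact hz
    rw [happ] at hxy
    rcases hx with hx | hx <;> rcases hy with hy | hy <;>
      rw [hx, hy] at hxy <;>
      simp [show ((0:ZMod 2)).val = 0 from rfl, show ((1:ZMod 2)).val = 1 from rfl] at hxy
    · exact Prod.ext (hx' x hx) (hx' y hy)
    · exact absurd hxy hM1
    · exact absurd hxy hN1
    · exfalso
      apply hNM
      rw [← hMinv]
      exact eq_inv_of_mul_eq_one_left hxy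
  have hrange : f.range = Subgroup.closure {N, M} := by
    apply le_antisymm
    · rintro _ ⟨⟨x, y⟩, rfl⟩
      rw [happ]
      exact mul_mem (pow_mem (Subgroup.subset_closure (by simp)) _)
        (pow_mem (Subgroup.subset_closure (by simp)) _)
    · rw [Subgroup.closure_le]
      rintro z (rfl | rfl)
      · exact ⟨(Multiplicative.ofAdd 1, 1), by rw [happ]; norm_num [show ((Multiplicative.toAdd (Multiplicative.ofAdd (1:ZMod 2)))).val = 1 from rfl, show ((Multiplicative.toAdd (1:Multiplicative (ZMod 2)))).val = 0 from rfl, show ((1:ZMod 2)).val = 1 from rfl, show ((0:ZMod 2)).val = 0 from rfl]⟩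
      · exact ⟨(1, Multiplicative.ofAdd 1), by rw [happ]; norm_num [show ((Multiplicative.toAdd (Multiplicative.ofAdd (1:ZMod 2)))).val = 1 from rfl, show ((Multiplicative.toAdd (1:Multiplicative (ZMod 2)))).val = 0 from rfl, show ((1:ZMod 2)).val = 1 from rfl, show ((0:ZMod 2)).val = 0 from rfl]⟩
  exact ⟨((MulEquiv.subgroupCongr hrange).symm.trans (MonoidHom.ofInjective hinj).symm)⟩

private def FixSp (g : GL (Fin 3) ℚ) : Submodule ℚ (Fin 3 → ℚ) :=
  LinearMap.ker (((g : Matrix (Fin 3) (Fin 3) ℚ)).mulVecLin - LinearMap.id)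

private lemma mem_Fix {g : GL (Fin 3) ℚ} {x : Fin 3 → ℚ} :
    x ∈ FixSp g ↔ (g : Matrix (Fin 3) (Fin 3) ℚ) *ᵥ x = x := by
  simp [FixSp, LinearMap.mem_ker, sub_eq_zero, Matrix.mulVecLin_apply]

private lemma fix_exists {g : GL (Fin 3) ℚ}
    (h : (((g : Matrix (Fin 3) (Fin 3) ℚ)) - 1).det = 0) :
    ∃ x, x ≠ 0 ∧ x ∈ FixSp g := by
  obtain ⟨x, hx0, hx⟩ := (Matrix.exists_mulVec_eq_zero_iff).2 h
  refine ⟨x, hx0, mem_Fix.2 ?_⟩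
  rwa [Matrix.sub_mulVec, Matrix.one_mulVec, sub_eq_zero] at hx

private lemma fix_invariant {g h : GL (Fin 3) ℚ} (hgh : g * h = h * g)
    {x : Fin 3 → ℚ} (hx : x ∈ FixSp g) :
    (h : Matrix (Fin 3) (Fin 3) ℚ) *ᵥ x ∈ FixSp g := by
  rw [mem_Fix] at hx ⊢
  rw [Matrix.mulVec_mulVec, ← Units.val_mul, hgh, Units.val_mul, ← Matrix.mulVec_mulVec, hx]

private lemma gl_cancel (g : GL (Fin 3) ℚ) (x : Fin 3 → ℚ) :
    ((g⁻¹ : GL (Fin 3) ℚ) : Matrix (Fin 3) (Fin 3) ℚ) *ᵥ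
      ((g : Matrix (Fin 3) (Fin 3) ℚ) *ᵥ x) = x := by
  rw [Matrix.mulVec_mulVec, ← Units.val_mul, inv_mul_cancel, Units.val_one, Matrix.one_mulVec]

private lemma smul_fix {g : GL (Fin 3) ℚ} {x : Fin 3 → ℚ} {c : ℚ}
    (hgx : (g : Matrix (Fin 3) (Fin 3) ℚ) *ᵥ x = c • x) (hx : x ≠ 0) :
    c ≠ 0 ∧ ((g⁻¹ : GL (Fin 3) ℚ) : Matrix (Fin 3) (Fin 3) ℚ) *ᵥ x = c⁻¹ • x := by
  have hc : c ≠ 0 := by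
    rintro rfl
    rw [zero_smul] at hgx
    have := gl_cancel g x
    rw [hgx, Matrix.mulVec_zero] at this
    exact hx this.symm
  refine ⟨hc, ?_⟩
  have h2 := gl_cancel g x
  rw [hgx, Matrix.mulVec_smul] at h2
  calc ((g⁻¹ : GL (Fin 3) ℚ) : Matrix (Fin 3) (Fin 3) ℚ) *ᵥ x
      = c⁻¹ • (c • (((g⁻¹ : GL (Fin 3) ℚ) : Matrix (Fin 3) (Fin 3) ℚ) *ᵥ x)) := by
        rw [smul_smul, inv_mul_cancel₀ hc, one_smul]
    _ = c⁻¹ • x := by rw [h2]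

private lemma matrix_eq_one_of_mulVec_id {X : Matrix (Fin 3) (Fin 3) ℚ}
    (h : ∀ x, X *ᵥ x = x) : X = 1 := by
  have h2 : Matrix.toLin' X = Matrix.toLin' 1 := by
    apply LinearMap.ext
    intro x
    rw [Matrix.toLin'_apply, Matrix.toLin'_apply, h x, Matrix.one_mulVec]
  exact Matrix.toLin'.injective h2

private lemma rational_core (A B : GL (Fin 3) ℚ) (hc : A * B = B * A)
    (hd : ∀ n m : ℤ, (((A ^ n * B ^ m : GL (Fin 3) ℚ) :
      Matrix (Fin 3) (Fin 3) ℚ) - 1).det = 0)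
    (hf : ∀ x : Fin 3 → ℚ, (A : Matrix (Fin 3) (Fin 3) ℚ) *ᵥ x = x →
      (B : Matrix (Fin 3) (Fin 3) ℚ) *ᵥ x = x → x = 0) :
    A ^ 2 = 1 ∧ B ^ 2 = 1 ∧ A ≠ 1 ∧ B ≠ 1 ∧ A ≠ B := by
  obtain ⟨e, he0, heA⟩ : ∃ x, x ≠ 0 ∧ x ∈ FixSp A := by
    have := hd 1 0
    rw [zpow_one, zpow_zero, mul_one] at this
    exact fix_exists this
  obtain ⟨f, hf0, hfB⟩ : ∃ x, x ≠ 0 ∧ x ∈ FixSp B := by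
    have := hd 0 1
    rw [zpow_one, zpow_zero, one_mul] at this
    exact fix_exists this
  obtain ⟨v, hv0, hvAB⟩ : ∃ x, x ≠ 0 ∧ x ∈ FixSp (A * B) := by
    have := hd 1 1
    rw [zpow_one, zpow_one] at this
    exact fix_exists this
  have heA' := mem_Fix.1 heA
  have hfB' := mem_Fix.1 hfB
  have hvAB' : (A : Matrix (Fin 3) (Fin 3) ℚ) *ᵥ ((B : Matrix (Fin 3) (Fin 3) ℚ) *ᵥ v)
      = v := by
    have := mem_Fix.1 hvAB
    rwa [Units.val_mul, ← Matrix.mulVec_mulVec] at this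
  -- trivial intersection
  have hinf : FixSp A ⊓ FixSp B = ⊥ := by
    rw [eq_bot_iff]
    rintro x ⟨hxA, hxB⟩
    exact hf x (mem_Fix.1 hxA) (mem_Fix.1 hxB)
  -- the sup of the two fixed spaces is not everything
  have hsup : FixSp A ⊔ FixSp B ≠ ⊤ := by
    intro htop
    obtain ⟨a, ha, b, hb, hab⟩ := Submodule.mem_sup.1 (htop ▸ Submodule.mem_top (x := v))
    have ha' : (B : Matrix (Fin 3) (Fin 3) ℚ) *ᵥ a ∈ FixSp A := fix_invariant hc ha
    have hb' : (A : Matrix (Fin 3) (Fin 3) ℚ) *ᵥ b ∈ FixSp B := fix_invariant hc.symm hb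
    have hBb : (B : Matrix (Fin 3) (Fin 3) ℚ) *ᵥ b = b := mem_Fix.1 hb
    have hABa : (A : Matrix (Fin 3) (Fin 3) ℚ) *ᵥ ((B : Matrix (Fin 3) (Fin 3) ℚ) *ᵥ a)
        = (B : Matrix (Fin 3) (Fin 3) ℚ) *ᵥ a := mem_Fix.1 ha'
    have hcomp : (B : Matrix (Fin 3) (Fin 3) ℚ) *ᵥ a + (A : Matrix (Fin 3) (Fin 3) ℚ) *ᵥ b
        = a + b := by
      have h1 := hvAB'
      rw [← hab, Matrix.mulVec_add, hBb, Matrix.mulVec_add, hABa] at h1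
      exact h1
    have hdiff : (B : Matrix (Fin 3) (Fin 3) ℚ) *ᵥ a - a ∈ FixSp A ⊓ FixSp B := by
      constructor
      · exact Submodule.sub_mem _ ha' ha
      · have h3 : (B : Matrix (Fin 3) (Fin 3) ℚ) *ᵥ a - a
            = b - (A : Matrix (Fin 3) (Fin 3) ℚ) *ᵥ b := by
          rw [sub_eq_sub_iff_add_eq_add, hcomp, add_comm]
        rw [h3]
        exact Submodule.sub_mem _ hb hb'
    rw [hinf, Submodule.mem_bot, sub_eq_zero] at hdiff
    have ha0 : a = 0 := hf a (mem_Fix.1 ha) hdiff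
    have hb2 : (A : Matrix (Fin 3) (Fin 3) ℚ) *ᵥ b = b := by
      have := hcomp
      rw [ha0, Matrix.mulVec_zero, zero_add, zero_add] at this
      exact this
    have hb0 : b = 0 := hf b hb2 hBb
    rw [← hab, ha0, hb0, add_zero] at hv0
    exact hv0 rfl
  -- dimensions
  have hrk3 : finrank ℚ (Fin 3 → ℚ) = 3 := by simp
  have h1A : 1 ≤ finrank ℚ (FixSp A) := by
    rw [← finrank_span_singleton (K := ℚ) he0]
    exact Submodule.finrank_mono ((Submodule.span_singleton_le_iff_mem _ _).2 heA)
  have h1B : 1 ≤ finrank ℚ (FixSp B) := by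
    rw [← finrank_span_singleton (K := ℚ) hf0]
    exact Submodule.finrank_mono ((Submodule.span_singleton_le_iff_mem _ _).2 hfB)
  have hlt : finrank ℚ ↥(FixSp A ⊔ FixSp B) < 3 := by
    have h := Submodule.finrank_lt (K := ℚ) (V := Fin 3 → ℚ) hsup
    rwa [hrk3] at h
  have hsumAB := Submodule.finrank_sup_add_finrank_inf_eq (FixSp A) (FixSp B)
  rw [hinf, finrank_bot, add_zero] at hsumAB
  have hrkA : finrank ℚ (FixSp A) = 1 := by omega
  have hrkB : finrank ℚ (FixSp B) = 1 := by omega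
  have hFA : FixSp A = ℚ ∙ e := by
    refine (Submodule.eq_of_le_of_finrank_eq
      ((Submodule.span_singleton_le_iff_mem _ _).2 heA) ?_).symm
    rw [finrank_span_singleton he0, hrkA]
  have hFB : FixSp B = ℚ ∙ f := by
    refine (Submodule.eq_of_le_of_finrank_eq
      ((Submodule.span_singleton_le_iff_mem _ _).2 hfB) ?_).symm
    rw [finrank_span_singleton hf0, hrkB]
  -- scalars lam (action of B on e) and mu (action of A on f)
  obtain ⟨lam, hlam⟩ : ∃ c : ℚ, (B : Matrix (Fin 3) (Fin 3) ℚ) *ᵥ e = c • e := by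
    have := fix_invariant hc heA
    rw [hFA, Submodule.mem_span_singleton] at this
    obtain ⟨c, hcc⟩ := this
    exact ⟨c, hcc.symm⟩
  obtain ⟨mu, hmu⟩ : ∃ c : ℚ, (A : Matrix (Fin 3) (Fin 3) ℚ) *ᵥ f = c • f := by
    have := fix_invariant hc.symm hfB
    rw [hFB, Submodule.mem_span_singleton] at this
    obtain ⟨c, hcc⟩ := this
    exact ⟨c, hcc.symm⟩
  have hlam1 : lam ≠ 1 := by
    rintro rfl
    rw [one_smul] at hlam
    exact he0 (hf e heA' hlam)
  have hmu1 : mu ≠ 1 := by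
    rintro rfl
    rw [one_smul] at hmu
    exact hf0 (hf f hmu hfB')
  -- independence of e and f
  have efind : ∀ α β : ℚ, α • e + β • f = 0 → α = 0 ∧ β = 0 := by
    intro α β h
    have hα : α = 0 := by
      by_contra hα
      have he' : e = (-(α⁻¹ * β)) • f := by
        have h2 : α • e = -(β • f) := by rwa [add_eq_zero_iff_eq_neg] at h
        calc e = α⁻¹ • (α • e) := by rw [smul_smul, inv_mul_cancel₀ hα, one_smul]
          _ = (-(α⁻¹ * β)) • f := by rw [h2, smul_neg, smul_smul, neg_smul]
      have heB : e ∈ FixSp B := by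
        rw [he']
        exact Submodule.smul_mem _ _ hfB
      have : e ∈ FixSp A ⊓ FixSp B := ⟨heA, heB⟩
      rw [hinf, Submodule.mem_bot] at this
      exact he0 this
    refine ⟨hα, ?_⟩
    rw [hα, zero_smul, zero_add] at h
    rcases smul_eq_zero.1 h with h' | h'
    · exact h'
    · exact absurd h' hf0
  -- anything in FixSp (A*B) lying in the plane of e,f is zero
  have plane : ∀ w, w ∈ FixSp (A * B) → ∀ α β : ℚ, w = α • e + β • f → w = 0 := by
    intro w hw α β hw'
    have h1 : (A : Matrix (Fin 3) (Fin 3) ℚ) *ᵥ ((B : Matrix (Fin 3) (Fin 3) ℚ) *ᵥ w) = w := by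
      have := mem_Fix.1 hw
      rwa [Units.val_mul, ← Matrix.mulVec_mulVec] at this
    rw [hw'] at h1
    simp only [Matrix.mulVec_add, Matrix.mulVec_smul, hlam, hfB', heA', hmu] at h1
    -- h1 : α • lam • e + β • mu • f = α • e + β • f
    have h2 : (α * (lam - 1)) • e + (β * (mu - 1)) • f = 0 := by
      linear_combination (norm := module) h1
    obtain ⟨hα, hβ⟩ := efind _ _ h2
    have hα0 : α = 0 := by
      rcases mul_eq_zero.1 hα with h' | h'
      · exact h'
      · exact absurd (sub_eq_zero.1 h') hlam1
    have hβ0 : β = 0 := by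
      rcases mul_eq_zero.1 hβ with h' | h'
      · exact h'
      · exact absurd (sub_eq_zero.1 h') hmu1
    rw [hw', hα0, hβ0, zero_smul, zero_smul, add_zero]
  -- the plane P spanned by e, f
  set P : Submodule ℚ (Fin 3 → ℚ) := (ℚ ∙ e) ⊔ (ℚ ∙ f) with hP
  have hPmem : ∀ w, w ∈ P ↔ ∃ α β : ℚ, w = α • e + β • f := by
    intro w
    constructor
    · intro hw
      obtain ⟨x, hx, y, hy, hxy⟩ := Submodule.mem_sup.1 hw
      obtain ⟨α, hα⟩ := Submodule.mem_span_singleton.1 hx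
      obtain ⟨β, hβ⟩ := Submodule.mem_span_singleton.1 hy
      exact ⟨α, β, by rw [← hxy, ← hα, ← hβ]⟩
    · rintro ⟨α, β, rfl⟩
      exact Submodule.add_mem _
        (Submodule.mem_sup_left (Submodule.smul_mem _ _ (Submodule.mem_span_singleton_self e)))
        (Submodule.mem_sup_right (Submodule.smul_mem _ _ (Submodule.mem_span_singleton_self f)))
  have hPrk : finrank ℚ P = 2 := by
    have hinf2 : (ℚ ∙ e) ⊓ (ℚ ∙ f) = ⊥ := by
      rw [eq_bot_iff]
      rintro x ⟨hx1, hx2⟩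
      obtain ⟨α, hα⟩ := Submodule.mem_span_singleton.1 hx1
      obtain ⟨β, hβ⟩ := Submodule.mem_span_singleton.1 hx2
      have : α • e + (-β) • f = 0 := by
        rw [hα, ← hβ, neg_smul, add_neg_cancel]
      have hα0 := (efind _ _ this).1
      rw [Submodule.mem_bot, ← hα, hα0, zero_smul]
    have := Submodule.finrank_sup_add_finrank_inf_eq (ℚ ∙ e) (ℚ ∙ f)
    rw [hinf2, finrank_bot, add_zero, finrank_span_singleton he0,
      finrank_span_singleton hf0] at this
    rw [hP, this]
  have hPint : FixSp (A * B) ⊓ P = ⊥ := by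
    rw [eq_bot_iff]
    rintro x ⟨hx1, hx2⟩
    obtain ⟨α, β, hx⟩ := (hPmem x).1 hx2
    rw [Submodule.mem_bot]
    exact plane x hx1 α β hx
  have hrkAB : finrank ℚ (FixSp (A * B)) = 1 := by
    have h1 : 1 ≤ finrank ℚ (FixSp (A * B)) := by
      rw [← finrank_span_singleton (K := ℚ) hv0]
      exact Submodule.finrank_mono ((Submodule.span_singleton_le_iff_mem _ _).2 hvAB)
    have hsum := Submodule.finrank_sup_add_finrank_inf_eq (FixSp (A * B)) P
    rw [hPint, finrank_bot, add_zero, hPrk] at hsum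
    have hle : finrank ℚ ↥(FixSp (A * B) ⊔ P) ≤ 3 := by
      have h := Submodule.finrank_le (FixSp (A * B) ⊔ P)
      rwa [hrk3] at h
    omega
  have hFAB : FixSp (A * B) = ℚ ∙ v := by
    refine (Submodule.eq_of_le_of_finrank_eq
      ((Submodule.span_singleton_le_iff_mem _ _).2 hvAB) ?_).symm
    rw [finrank_span_singleton hv0, hrkAB]
  -- the whole space decomposes
  have htop : FixSp (A * B) ⊔ P = ⊤ := by
    apply Submodule.eq_top_of_finrank_eq
    have hsum := Submodule.finrank_sup_add_finrank_inf_eq (FixSp (A * B)) P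
    rw [hPint, finrank_bot, add_zero, hPrk, hrkAB] at hsum
    rw [hsum, hrk3]
  have hdecomp : ∀ x : Fin 3 → ℚ, ∃ α β γ : ℚ, x = α • e + β • f + γ • v := by
    intro x
    obtain ⟨z, hz, p, hp, hzp⟩ := Submodule.mem_sup.1 (htop ▸ Submodule.mem_top (x := x))
    obtain ⟨α, β, hp'⟩ := (hPmem p).1 hp
    rw [hFAB] at hz
    obtain ⟨γ, hγ⟩ := Submodule.mem_span_singleton.1 hz
    exact ⟨α, β, γ, by rw [← hzp, hp', ← hγ]; module⟩
  -- triple independence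
  have trip : ∀ α β γ : ℚ, α • e + β • f + γ • v = 0 → α = 0 ∧ β = 0 ∧ γ = 0 := by
    intro α β γ h
    have hγ : γ = 0 := by
      by_contra hγ
      have hv' : v = (-(γ⁻¹ * α)) • e + (-(γ⁻¹ * β)) • f := by
        have h2 : γ • v = -(α • e) + -(β • f) := by
          linear_combination (norm := module) h
        calc v = γ⁻¹ • (γ • v) := by rw [smul_smul, inv_mul_cancel₀ hγ, one_smul]
          _ = (-(γ⁻¹ * α)) • e + (-(γ⁻¹ * β)) • f := by
            rw [h2]; module
      exact hv0 (plane v hvAB _ _ hv')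
    rw [hγ, zero_smul, add_zero] at h
    obtain ⟨hα, hβ⟩ := efind _ _ h
    exact ⟨hα, hβ, hγ⟩
  -- scalars eps, del : action of A, B on v
  obtain ⟨eps, heps⟩ : ∃ c : ℚ, (A : Matrix (Fin 3) (Fin 3) ℚ) *ᵥ v = c • v := by
    have hcomm2 : (A * B) * A = A * (A * B) := by
      rw [mul_assoc, ← hc, ← mul_assoc]
    have := fix_invariant hcomm2 hvAB
    rw [hFAB, Submodule.mem_span_singleton] at this
    obtain ⟨c, hcc⟩ := this
    exact ⟨c, hcc.symm⟩
  obtain ⟨del, hdel⟩ : ∃ c : ℚ, (B : Matrix (Fin 3) (Fin 3) ℚ) *ᵥ v = c • v := by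
    have hcomm2 : (A * B) * B = B * (A * B) := by
      conv_lhs => rw [hc]
      rw [mul_assoc]
    have := fix_invariant hcomm2 hvAB
    rw [hFAB, Submodule.mem_span_singleton] at this
    obtain ⟨c, hcc⟩ := this
    exact ⟨c, hcc.symm⟩
  have hepsdel : del * eps = 1 := by
    have h1 := hvAB'
    rw [hdel, Matrix.mulVec_smul, heps, smul_smul] at h1
    have h2 : (del * eps - 1) • v = 0 := by
      linear_combination (norm := module) h1
    rcases smul_eq_zero.1 h2 with h' | h'
    · exact sub_eq_zero.1 h'
    · exact absurd h' hv0
  have heps1 : eps ≠ 1 := by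
    rintro rfl
    rw [mul_one] at hepsdel
    rw [one_smul] at heps
    rw [hepsdel, one_smul] at hdel
    exact hv0 (hf v heps hdel)
  -- inverse actions
  obtain ⟨hlam0, hlaminv⟩ := smul_fix hlam he0
  obtain ⟨hdel0, hdelinv⟩ := smul_fix hdel hv0
  have hfBinv : ((B⁻¹ : GL (Fin 3) ℚ) : Matrix (Fin 3) (Fin 3) ℚ) *ᵥ f = f := by
    conv_lhs => rw [← hfB']
    exact gl_cancel B f
  -- use the element A * B⁻¹ to show eps = -1
  have hepsm1 : eps = -1 := by
    obtain ⟨w, hw0, hw⟩ : ∃ x, x ≠ 0 ∧ x ∈ FixSp (A * B⁻¹) := by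
      have := hd 1 (-1)
      rw [zpow_one, _root_.zpow_neg_one] at this
      exact fix_exists this
    obtain ⟨α, β, γ, hwd⟩ := hdecomp w
    have h1 : (A : Matrix (Fin 3) (Fin 3) ℚ) *ᵥ
        (((B⁻¹ : GL (Fin 3) ℚ) : Matrix (Fin 3) (Fin 3) ℚ) *ᵥ w) = w := by
      have := mem_Fix.1 hw
      rwa [Units.val_mul, ← Matrix.mulVec_mulVec] at this
    rw [hwd] at h1
    simp only [Matrix.mulVec_add, Matrix.mulVec_smul, hlaminv, hfBinv, hdelinv,
      heA', hmu, heps] at h1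
    -- h1 : α • lam⁻¹ • e + β • mu • f + γ • del⁻¹ • eps • v = α • e + β • f + γ • v
    have h2 : (α * (lam⁻¹ - 1)) • e + (β * (mu - 1)) • f + (γ * (del⁻¹ * eps - 1)) • v = 0 := by
      linear_combination (norm := module) h1
    obtain ⟨hα, hβ, hγ⟩ := trip _ _ _ h2
    have hα0 : α = 0 := by
      rcases mul_eq_zero.1 hα with h' | h'
      · exact h'
      · exfalso
        exact hlam1 (inv_eq_one.1 (sub_eq_zero.1 h'))
    have hβ0 : β = 0 := by
      rcases mul_eq_zero.1 hβ with h' | h'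
      · exact h'
      · exact absurd (sub_eq_zero.1 h') hmu1
    have hγ0 : γ ≠ 0 := by
      rintro rfl
      rw [hα0, hβ0, zero_smul, zero_smul, zero_smul, add_zero, add_zero] at hwd
      exact hw0 hwd
    have hde : del⁻¹ * eps = 1 := by
      rcases mul_eq_zero.1 hγ with h' | h'
      · exact absurd h' hγ0
      · exact sub_eq_zero.1 h'
    have hdeleps : eps = del := by
      field_simp at hde
      linarith [hde]
    have heps2 : eps * eps = 1 := by rw [hdeleps] at hepsdel ⊢; linarith [hepsdel]
    rcases mul_self_eq_one_iff.1 heps2 with h' | h'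
    · exact absurd h' heps1
    · exact h'
  have hdelm1 : del = -1 := by
    have : del * (-1) = 1 := by rw [← hepsm1]; exact hepsdel
    linarith
  rw [hepsm1] at heps
  rw [hdelm1] at hdel
  -- use A^2 * B to show mu = -1
  have hmum1 : mu = -1 := by
    obtain ⟨w, hw0, hw⟩ : ∃ x, x ≠ 0 ∧ x ∈ FixSp (A * A * B) := by
      have := hd 2 1
      rw [zpow_one, show ((2:ℤ)) = (2:ℕ) from rfl, zpow_natCast, pow_two] at this
      exact fix_exists this
    obtain ⟨α, β, γ, hwd⟩ := hdecomp w
    have h1 : (A : Matrix (Fin 3) (Fin 3) ℚ) *ᵥ ((A : Matrix (Fin 3) (Fin 3) ℚ) *ᵥ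
        ((B : Matrix (Fin 3) (Fin 3) ℚ) *ᵥ w)) = w := by
      have := mem_Fix.1 hw
      rwa [Units.val_mul, Units.val_mul, ← Matrix.mulVec_mulVec, ← Matrix.mulVec_mulVec] at this
    rw [hwd] at h1
    simp only [Matrix.mulVec_add, Matrix.mulVec_smul, hlam, hfB', hdel,
      heA', hmu, heps] at h1
    have h2 : (α * (lam - 1)) • e + (β * (mu * mu - 1)) • f + (γ * (-2)) • v = 0 := by
      linear_combination (norm := module) h1
    obtain ⟨hα, hβ, hγ⟩ := trip _ _ _ h2
    have hα0 : α = 0 := by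
      rcases mul_eq_zero.1 hα with h' | h'
      · exact h'
      · exact absurd (sub_eq_zero.1 h') hlam1
    have hγ0 : γ = 0 := by
      rcases mul_eq_zero.1 hγ with h' | h'
      · exact h'
      · norm_num at h'
    have hβ0 : β ≠ 0 := by
      rintro rfl
      rw [hα0, hγ0, zero_smul, zero_smul, zero_smul, add_zero, add_zero] at hwd
      exact hw0 hwd
    have hmu2 : mu * mu = 1 := by
      rcases mul_eq_zero.1 hβ with h' | h'
      · exact absurd h' hβ0
      · exact sub_eq_zero.1 h'
    rcases mul_self_eq_one_iff.1 hmu2 with h' | h'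
    · exact absurd h' hmu1
    · exact h'
  -- use A * B^2 to show lam = -1
  have hlamm1 : lam = -1 := by
    obtain ⟨w, hw0, hw⟩ : ∃ x, x ≠ 0 ∧ x ∈ FixSp (A * (B * B)) := by
      have := hd 1 2
      rw [zpow_one, show ((2:ℤ)) = (2:ℕ) from rfl, zpow_natCast, pow_two] at this
      exact fix_exists this
    obtain ⟨α, β, γ, hwd⟩ := hdecomp w
    have h1 : (A : Matrix (Fin 3) (Fin 3) ℚ) *ᵥ ((B : Matrix (Fin 3) (Fin 3) ℚ) *ᵥ
        ((B : Matrix (Fin 3) (Fin 3) ℚ) *ᵥ w)) = w := by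
      have := mem_Fix.1 hw
      rwa [Units.val_mul, Units.val_mul, ← Matrix.mulVec_mulVec, ← Matrix.mulVec_mulVec] at this
    rw [hwd] at h1
    simp only [Matrix.mulVec_add, Matrix.mulVec_smul, hlam, hfB', hdel,
      heA', hmu, heps] at h1
    have h2 : (α * (lam * lam - 1)) • e + (β * (mu - 1)) • f + (γ * (-2)) • v = 0 := by
      linear_combination (norm := module) h1
    obtain ⟨hα, hβ, hγ⟩ := trip _ _ _ h2
    have hβ0 : β = 0 := by
      rcases mul_eq_zero.1 hβ with h' | h'
      · exact h'
      · exact absurd (sub_eq_zero.1 h') hmu1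
    have hγ0 : γ = 0 := by
      rcases mul_eq_zero.1 hγ with h' | h'
      · exact h'
      · norm_num at h'
    have hα0 : α ≠ 0 := by
      rintro rfl
      rw [hβ0, hγ0, zero_smul, zero_smul, zero_smul, add_zero, add_zero] at hwd
      exact hw0 hwd
    have hlam2 : lam * lam = 1 := by
      rcases mul_eq_zero.1 hα with h' | h'
      · exact absurd h' hα0
      · exact sub_eq_zero.1 h'
    rcases mul_self_eq_one_iff.1 hlam2 with h' | h'
    · exact absurd h' hlam1
    · exact h'
  rw [hmum1] at hmu
  rw [hlamm1] at hlam
  -- now A acts as diag(1, -1, -1) and B as diag(-1, 1, -1) in basis (e, f, v)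
  have hA2 : A ^ 2 = 1 := by
    apply Units.ext
    rw [Units.val_pow_eq_pow_val, pow_two, Units.val_one]
    apply matrix_eq_one_of_mulVec_id
    intro x
    obtain ⟨α, β, γ, hx⟩ := hdecomp x
    rw [hx, ← Matrix.mulVec_mulVec]
    simp only [Matrix.mulVec_add, Matrix.mulVec_smul, heA', hmu, heps]
    module
  have hB2 : B ^ 2 = 1 := by
    apply Units.ext
    rw [Units.val_pow_eq_pow_val, pow_two, Units.val_one]
    apply matrix_eq_one_of_mulVec_id
    intro x
    obtain ⟨α, β, γ, hx⟩ := hdecomp x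
    rw [hx, ← Matrix.mulVec_mulVec]
    simp only [Matrix.mulVec_add, Matrix.mulVec_smul, hlam, hfB', hdel]
    module
  have two_smul_ne : ∀ x : Fin 3 → ℚ, x ≠ 0 → ¬((-1 : ℚ) • x = x) := by
    intro x hx h
    have : (2 : ℚ) • x = 0 := by
      linear_combination (norm := module) - h
    rcases smul_eq_zero.1 this with h' | h'
    · norm_num at h'
    · exact hx h'
  have hA1 : A ≠ 1 := by
    rintro rfl
    rw [Units.val_one, Matrix.one_mulVec] at hmu
    exact two_smul_ne f hf0 hmu.symm
  have hB1 : B ≠ 1 := by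
    rintro rfl
    rw [Units.val_one, Matrix.one_mulVec] at hlam
    exact two_smul_ne e he0 hlam.symm
  have hAB : A ≠ B := by
    intro h
    rw [← h] at hlam
    rw [heA'] at hlam
    exact two_smul_ne e he0 hlam.symm
  exact ⟨hA2, hB2, hA1, hB1, hAB⟩

private lemma castVec (P : Matrix (Fin 3) (Fin 3) ℤ) (k : Fin 3 → ℤ) :
    (P.map (Int.cast : ℤ → ℚ)) *ᵥ (fun i => (k i : ℚ)) = fun i => ((P *ᵥ k) i : ℚ) := by
  ext i
  simp [Matrix.mulVec, dotProduct, Matrix.map_apply]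

private lemma fix_zpow (g : GL (Fin 3) ℤ) (k : Fin 3 → ℤ)
    (h : (g : Matrix (Fin 3) (Fin 3) ℤ) *ᵥ k = k) :
    ∀ n : ℤ, ((g ^ n : GL (Fin 3) ℤ) : Matrix (Fin 3) (Fin 3) ℤ) *ᵥ k = k := by
  have hnat : ∀ n : ℕ, ((g ^ n : GL (Fin 3) ℤ) : Matrix (Fin 3) (Fin 3) ℤ) *ᵥ k = k := by
    intro n
    induction n with
    | zero => simp
    | succ n ih =>
      rw [pow_succ, Units.val_mul, ← Matrix.mulVec_mulVec, h, ih]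
  intro n
  rcases n with n | n
  · rw [Int.ofNat_eq_coe, zpow_natCast]
    exact hnat n
  · rw [Int.negSucc_eq, _root_.zpow_neg]
    have h1 := hnat (n + 1)
    have h2 : ((g ^ (↑n + 1 : ℤ))⁻¹ : GL (Fin 3) ℤ).val *ᵥ
        ((g ^ (↑n + 1 : ℤ) : GL (Fin 3) ℤ).val *ᵥ k) = k := by
      rw [Matrix.mulVec_mulVec, ← Units.val_mul, inv_mul_cancel, Units.val_one,
        Matrix.one_mulVec]
    rw [show ((↑n + 1 : ℤ)) = ((n + 1 : ℕ) : ℤ) by push_cast; ring, zpow_natCast] at h2 ⊢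
    rwa [h1] at h2

theorem klein_four_structure_commuting_pair
    (N M : GL (Fin 3) ℤ)
    (hcomm : N * M = M * N)
    (hspec : ∀ n m : ℤ, (((N ^ n * M ^ m : GL (Fin 3) ℤ) :
      Matrix (Fin 3) (Fin 3) ℤ) - 1).det = 0)
    (hfix : ∀ k : Fin 3 → ℤ,
      (∀ n m : ℤ, ((N ^ n * M ^ m : GL (Fin 3) ℤ) :
        Matrix (Fin 3) (Fin 3) ℤ).mulVec k = k) → k = 0) :
    N ^ 2 = 1 ∧ M ^ 2 = 1 ∧ N ≠ 1 ∧ M ≠ 1 ∧ N ≠ M ∧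
      Nonempty (↥(Subgroup.closure {N, M} : Subgroup (GL (Fin 3) ℤ)) ≃*
        Multiplicative (ZMod 2) × Multiplicative (ZMod 2)) := by
  set φ : Matrix (Fin 3) (Fin 3) ℤ →+* Matrix (Fin 3) (Fin 3) ℚ :=
    (Int.castRingHom ℚ).mapMatrix with hφ
  have hφinj : Function.Injective φ := by
    intro X Y h
    ext i j
    have := congrFun (congrFun h i) j
    simp only [hφ, RingHom.mapMatrix_apply, Matrix.map_apply, eq_intCast] at this
    exact_mod_cast this
  set G : GL (Fin 3) ℤ →* GL (Fin 3) ℚ := Units.map φ.toMonoidHom with hG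
  have hGinj : Function.Injective G := by
    intro x y h
    apply Units.ext
    apply hφinj
    have := congrArg Units.val h
    exact this
  have hGcoe : ∀ g : GL (Fin 3) ℤ,
      ((G g : GL (Fin 3) ℚ) : Matrix (Fin 3) (Fin 3) ℚ)
        = ((g : Matrix (Fin 3) (Fin 3) ℤ)).map (Int.cast : ℤ → ℚ) := by
    intro g; rfl
  set A : GL (Fin 3) ℚ := G N with hA
  set B : GL (Fin 3) ℚ := G M with hB
  have hcQ : A * B = B * A := by
    rw [hA, hB, ← _root_.map_mul, ← _root_.map_mul, hcomm]
  have hdQ : ∀ n m : ℤ, (((A ^ n * B ^ m : GL (Fin 3) ℚ) :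
      Matrix (Fin 3) (Fin 3) ℚ) - 1).det = 0 := by
    intro n m
    have h1 : (A ^ n * B ^ m : GL (Fin 3) ℚ) = G (N ^ n * M ^ m) := by
      rw [_root_.map_mul, _root_.map_zpow, _root_.map_zpow]
    rw [h1, hGcoe]
    have h2 : (((N ^ n * M ^ m : GL (Fin 3) ℤ) : Matrix (Fin 3) (Fin 3) ℤ)).map
        (Int.cast : ℤ → ℚ) - 1
        = φ (((N ^ n * M ^ m : GL (Fin 3) ℤ) : Matrix (Fin 3) (Fin 3) ℤ) - 1) := by
      rw [_root_.map_sub, _root_.map_one]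
      rfl
    rw [h2, ← RingHom.map_det]
    rw [hspec n m]
    simp
  have hfQ : ∀ x : Fin 3 → ℚ, (A : Matrix (Fin 3) (Fin 3) ℚ) *ᵥ x = x →
      (B : Matrix (Fin 3) (Fin 3) ℚ) *ᵥ x = x → x = 0 := by
    intro x hxA hxB
    -- clear denominators
    set d : ℤ := ∏ i, (x i).den with hd
    have hd0 : (d : ℚ) ≠ 0 := by
      rw [hd]
      push_cast
      refine Finset.prod_ne_zero_iff.2 fun i _ => ?_
      exact_mod_cast (Nat.cast_ne_zero.2 (x i).den_nz : ((x i).den : ℚ) ≠ 0)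
    have hint : ∀ i, ∃ m : ℤ, (m : ℚ) = (d : ℚ) * x i := by
      intro i
      have hdvd : ((x i).den : ℤ) ∣ d := by
        rw [hd]
        exact Finset.dvd_prod_of_mem _ (Finset.mem_univ i)
      obtain ⟨c, hc⟩ := hdvd
      refine ⟨c * (x i).num, ?_⟩
      push_cast
      rw [hc]
      push_cast
      rw [mul_comm ((x i).den : ℚ) (c : ℚ), mul_assoc]
      congr 1
      rw [mul_comm]
      exact_mod_cast (Rat.mul_den_eq_num (x i)).symm
    choose k hk using hint
    have hkx : (fun i => ((k i : ℚ))) = (d : ℚ) • x := by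
      ext i
      rw [hk i]
      rfl
    have hNk : (N : Matrix (Fin 3) (Fin 3) ℤ) *ᵥ k = k := by
      have h1 := castVec (N : Matrix (Fin 3) (Fin 3) ℤ) k
      rw [hkx] at h1
      have h2 : ((N : Matrix (Fin 3) (Fin 3) ℤ)).map (Int.cast : ℤ → ℚ) *ᵥ ((d : ℚ) • x)
          = (d : ℚ) • x := by
        rw [Matrix.mulVec_smul, ← hGcoe, hxA]
      rw [h2] at h1
      ext i
      have h3 := congrFun h1.symm i
      have h4 : ((((N : Matrix (Fin 3) (Fin 3) ℤ)) *ᵥ k) i : ℚ) = ((k i : ℚ)) :=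
        h3.trans (congrFun hkx i).symm
      exact_mod_cast h4
    have hMk : (M : Matrix (Fin 3) (Fin 3) ℤ) *ᵥ k = k := by
      have h1 := castVec (M : Matrix (Fin 3) (Fin 3) ℤ) k
      rw [hkx] at h1
      have h2 : ((M : Matrix (Fin 3) (Fin 3) ℤ)).map (Int.cast : ℤ → ℚ) *ᵥ ((d : ℚ) • x)
          = (d : ℚ) • x := by
        rw [Matrix.mulVec_smul, ← hGcoe, hxB]
      rw [h2] at h1
      ext i
      have h3 := congrFun h1.symm i
      have h4 : ((((M : Matrix (Fin 3) (Fin 3) ℤ)) *ᵥ k) i : ℚ) = ((k i : ℚ)) :=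
        h3.trans (congrFun hkx i).symm
      exact_mod_cast h4
    have hk0 : k = 0 := by
      apply hfix
      intro n m
      rw [Units.val_mul, ← Matrix.mulVec_mulVec, fix_zpow M k hMk m, fix_zpow N k hNk n]
    have hx0 : (d : ℚ) • x = 0 := by
      rw [← hkx, hk0]
      ext i
      simp
    rcases smul_eq_zero.1 hx0 with h' | h'
    · exact absurd h' hd0
    · exact h'
  obtain ⟨hA2, hB2, hA1, hB1, hAB⟩ := rational_core A B hcQ hdQ hfQ
  have hN2 : N ^ 2 = 1 := by
    apply hGinj
    rw [_root_.map_pow, _root_.map_one]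
    exact hA2
  have hM2 : M ^ 2 = 1 := by
    apply hGinj
    rw [_root_.map_pow, _root_.map_one]
    exact hB2
  have hN1 : N ≠ 1 := by
    rintro rfl
    rw [hA, _root_.map_one] at hA1
    exact hA1 rfl
  have hM1 : M ≠ 1 := by
    rintro rfl
    rw [hB, _root_.map_one] at hB1
    exact hB1 rfl
  have hNM : N ≠ M := by
    rintro rfl
    exact hAB rfl
  exact ⟨hN2, hM2, hN1, hM1, hNM, klein_iso N M hcomm hN2 hM2 hN1 hM1 hNM⟩
end

section
/- Let N and M be invertible complex 3×3 matrices such that N·M = M·N, each of the kernels ker(N − I), ker(M − I), and ker(N·M − I) is a nonzero subspace of ℂ³, and ker(N − I) ∩ ker(M − I) = {0}. Then each of ker(N − I), ker(M − I), and ker(N·M − I) has dimension one, these three subspaces are pairwise independent and span ℂ³, i.e. ℂ³ = ker(N − I) ⊕ ker(M − I) ⊕ ker(N·M − I) as an internal direct sum. -/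
open Matrix

private lemma mem_ker_iff' (A : Matrix (Fin 3) (Fin 3) ℂ) (x : Fin 3 → ℂ) :
    x ∈ LinearMap.ker (Matrix.toLin' (A - 1)) ↔ A *ᵥ x = x := by
  simp [LinearMap.mem_ker, Matrix.toLin'_apply, Matrix.sub_mulVec, sub_eq_zero]

theorem kernel_direct_sum_decomposition
    (N M : Matrix (Fin 3) (Fin 3) ℂ)
    (hN : IsUnit N.det) (hM : IsUnit M.det)
    (hcomm : N * M = M * N)
    (hkN : LinearMap.ker (Matrix.toLin' (N - 1)) ≠ ⊥)
    (hkM : LinearMap.ker (Matrix.toLin' (M - 1)) ≠ ⊥)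
    (hkNM : LinearMap.ker (Matrix.toLin' (N * M - 1)) ≠ ⊥)
    (hint : LinearMap.ker (Matrix.toLin' (N - 1)) ⊓
      LinearMap.ker (Matrix.toLin' (M - 1)) = ⊥) :
    Module.finrank ℂ (LinearMap.ker (Matrix.toLin' (N - 1))) = 1 ∧
    Module.finrank ℂ (LinearMap.ker (Matrix.toLin' (M - 1))) = 1 ∧
    Module.finrank ℂ (LinearMap.ker (Matrix.toLin' (N * M - 1))) = 1 ∧
    DirectSum.IsInternal
      ![LinearMap.ker (Matrix.toLin' (N - 1)),
        LinearMap.ker (Matrix.toLin' (M - 1)),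
        LinearMap.ker (Matrix.toLin' (N * M - 1))] := by
  set KN := LinearMap.ker (Matrix.toLin' (N - 1)) with hKN
  set KM := LinearMap.ker (Matrix.toLin' (M - 1)) with hKM
  set K := LinearMap.ker (Matrix.toLin' (N * M - 1)) with hK
  -- key disjointness: K ⊓ (KN ⊔ KM) = ⊥
  have key : Disjoint K (KN ⊔ KM) := by
    rw [disjoint_iff]
    rw [eq_bot_iff]
    intro w hw
    obtain ⟨hw1, hw2⟩ := Submodule.mem_inf.mp hw
    obtain ⟨u, hu, v, hv, rfl⟩ := Submodule.mem_sup.mp hw2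
    rw [mem_ker_iff'] at hw1
    have hu' : N *ᵥ u = u := (mem_ker_iff' N u).mp hu
    have hv' : M *ᵥ v = v := (mem_ker_iff' M v).mp hv
    -- (N*M) *ᵥ (u+v) = M *ᵥ u + N *ᵥ v
    have e1 : (N * M) *ᵥ u = M *ᵥ u := by
      rw [hcomm, ← Matrix.mulVec_mulVec, hu']
    have e2 : (N * M) *ᵥ v = N *ᵥ v := by
      rw [← Matrix.mulVec_mulVec, hv']
    have e3 : M *ᵥ u + N *ᵥ v = u + v := by
      rw [← e1, ← e2, ← Matrix.mulVec_add, hw1]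
    have e4 : M *ᵥ u - u = v - N *ᵥ v := by linear_combination e3
    -- M *ᵥ u ∈ KN since M,N commute
    have hMu : M *ᵥ u ∈ KN := by
      rw [mem_ker_iff', Matrix.mulVec_mulVec, hcomm, ← Matrix.mulVec_mulVec, hu']
    have hNv : N *ᵥ v ∈ KM := by
      rw [mem_ker_iff', Matrix.mulVec_mulVec, ← hcomm, ← Matrix.mulVec_mulVec, hv']
    have hL : M *ᵥ u - u ∈ KN := sub_mem hMu hu
    have hR : v - N *ᵥ v ∈ KM := sub_mem hv hNv
    have hz : M *ᵥ u - u = 0 := by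
      have : M *ᵥ u - u ∈ KN ⊓ KM := Submodule.mem_inf.mpr ⟨hL, e4 ▸ hR⟩
      rwa [hint, Submodule.mem_bot] at this
    have hu0 : u = (0 : Fin 3 → ℂ) := by
      have hu2 : u ∈ KM := by rw [mem_ker_iff']; linear_combination hz
      have : u ∈ KN ⊓ KM := Submodule.mem_inf.mpr ⟨hu, hu2⟩
      rwa [hint, Submodule.mem_bot] at this
    have hv0 : v = (0 : Fin 3 → ℂ) := by
      have hv2 : v ∈ KN := by
        rw [mem_ker_iff']
        have : v - N *ᵥ v = 0 := by rw [← e4, hz]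
        linear_combination -this
      have : v ∈ KN ⊓ KM := Submodule.mem_inf.mpr ⟨hv2, hv⟩
      rwa [hint, Submodule.mem_bot] at this
    simp [hu0, hv0]
  have hdisNM : Disjoint KN KM := disjoint_iff.mpr hint
  -- finrank computations
  have htot : Module.finrank ℂ (Fin 3 → ℂ) = 3 := by simp
  have h1 : Module.finrank ℂ KN + Module.finrank ℂ KM
      = Module.finrank ℂ ↥(KN ⊔ KM) := by
    have := Submodule.finrank_sup_add_finrank_inf_eq KN KM
    rw [hint] at this
    simpa using this.symm
  have h2 : Module.finrank ℂ ↥(KN ⊔ KM) + Module.finrank ℂ K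
      = Module.finrank ℂ ↥((KN ⊔ KM) ⊔ K) := by
    have := Submodule.finrank_sup_add_finrank_inf_eq (KN ⊔ KM) K
    rw [(disjoint_iff.mp key.symm)] at this
    simpa using this.symm
  have hle : Module.finrank ℂ ↥((KN ⊔ KM) ⊔ K) ≤ 3 :=
    le_trans (Submodule.finrank_le _) (le_of_eq htot)
  have hposN : Module.finrank ℂ KN ≠ 0 := by
    simpa [Submodule.finrank_eq_zero] using hkN
  have hposM : Module.finrank ℂ KM ≠ 0 := by
    simpa [Submodule.finrank_eq_zero] using hkM
  have hposK : Module.finrank ℂ K ≠ 0 := by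
    simpa [Submodule.finrank_eq_zero] using hkNM
  have hdN : Module.finrank ℂ KN = 1 := by omega
  have hdM : Module.finrank ℂ KM = 1 := by omega
  have hdK : Module.finrank ℂ K = 1 := by omega
  have hsup3 : Module.finrank ℂ ↥((KN ⊔ KM) ⊔ K) = 3 := by omega
  have htop : (KN ⊔ KM) ⊔ K = ⊤ :=
    Submodule.eq_top_of_finrank_eq (by rw [hsup3]; exact htot.symm)
  refine ⟨hdN, hdM, hdK, ?_⟩
  rw [DirectSum.isInternal_submodule_iff_iSupIndep_and_iSup_eq_top]
  constructor
  · -- independence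
    intro i
    fin_cases i
    · -- KN disjoint from sup of KM, K
      have hsub : (⨆ (j : Fin 3) (_ : j ≠ 0),
          ![KN, KM, K] j) ≤ KM ⊔ K := by
        apply iSup_le; intro j; apply iSup_le; intro hj
        fin_cases j
        · exact absurd rfl hj
        · exact le_sup_left
        · exact le_sup_right
      refine Disjoint.mono_right hsub ?_
      exact hdisNM.disjoint_sup_right_of_disjoint_sup_left key.symm
    · have hsub : (⨆ (j : Fin 3) (_ : j ≠ 1),
          ![KN, KM, K] j) ≤ KN ⊔ K := by
        apply iSup_le; intro j; apply iSup_le; intro hj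
        fin_cases j
        · exact le_sup_left
        · exact absurd rfl hj
        · exact le_sup_right
      refine Disjoint.mono_right hsub ?_
      exact hdisNM.symm.disjoint_sup_right_of_disjoint_sup_left
        (by rw [sup_comm]; exact key.symm)
    · have hsub : (⨆ (j : Fin 3) (_ : j ≠ 2),
          ![KN, KM, K] j) ≤ KN ⊔ KM := by
        apply iSup_le; intro j; apply iSup_le; intro hj
        fin_cases j
        · exact le_sup_left
        · exact le_sup_right
        · exact absurd rfl hj
      exact Disjoint.mono_right hsub key
  · -- iSup = ⊤
    rw [eq_top_iff, ← htop]
    refine sup_le (sup_le ?_ ?_) ?_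
    · exact le_iSup (![KN, KM, K]) 0
    · exact le_iSup (![KN, KM, K]) 1
    · exact le_iSup (![KN, KM, K]) 2
end

section
/- Let p ≥ 3 and let A : ℤ^p → GL(3,ℤ) be a spectrally unitary ℤ^p-action on ℤ^3 with Fix(A) = {0}. Then there exists an index i with 1 ≤ i ≤ p such that the only k ∈ ℤ³ satisfying A(e_j)·k = k for every j ≠ i is k = 0, where e_1, …, e_p is the standard basis of ℤ^p. -/
open Matrix


/-- If a vector is fixed by all generator images, it is fixed by the whole action. -/
lemma fix_all' {p : ℕ} (A : (Fin p → ℤ) → GL (Fin 3) ℤ)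
    (hA : ∀ ℓ ℓ' : Fin p → ℤ, A (ℓ + ℓ') = A ℓ * A ℓ') (k : Fin 3 → ℤ)
    (h : ∀ j : Fin p, (A (Pi.single j 1) : Matrix (Fin 3) (Fin 3) ℤ).mulVec k = k) :
    ∀ ℓ : Fin p → ℤ, (A ℓ : Matrix (Fin 3) (Fin 3) ℤ).mulVec k = k := by
  have h0 : A 0 = 1 := by
    have := hA 0 0
    rw [add_zero] at this
    exact (mul_left_cancel (a := A 0) (by rw [← this, mul_one])).symm
  have h0k : (A 0 : Matrix (Fin 3) (Fin 3) ℤ).mulVec k = k := by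
    rw [h0]; simp [Matrix.one_mulVec]
  set S : AddSubgroup (Fin p → ℤ) :=
    { carrier := {ℓ | (A ℓ : Matrix (Fin 3) (Fin 3) ℤ).mulVec k = k}
      zero_mem' := h0k
      add_mem' := by
        intro x y hx hy
        show (A (x + y) : Matrix (Fin 3) (Fin 3) ℤ).mulVec k = k
        rw [hA x y, Units.val_mul, ← Matrix.mulVec_mulVec, hy, hx]
      neg_mem' := by
        intro x hx
        show (A (-x) : Matrix (Fin 3) (Fin 3) ℤ).mulVec k = k
        have : (A (-x) : Matrix (Fin 3) (Fin 3) ℤ).mulVec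
            ((A x : Matrix (Fin 3) (Fin 3) ℤ).mulVec k) = k := by
          rw [Matrix.mulVec_mulVec, ← Units.val_mul, ← hA, neg_add_cancel, h0k]
        rwa [hx] at this } with hS
  intro ℓ
  have : ℓ ∈ S := by
    have hdecomp : ℓ = ∑ j : Fin p, ℓ j • (Pi.single j (1:ℤ)) := by
      ext m
      simp [Pi.single_apply, Finset.sum_ite_eq']
    rw [hdecomp]
    exact S.sum_mem fun j _ => S.zsmul_mem (h j) (ℓ j)
  exact this
lemma fixed_of_comb (M : Matrix (Fin 3) (Fin 3) ℤ) (x y z : ℤ) (k1 k2 k3 : Fin 3 → ℤ)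
    (hx : x ≠ 0) (h2 : M.mulVec k2 = k2) (h3 : M.mulVec k3 = k3)
    (hsum : x • k1 + y • k2 + z • k3 = 0) : M.mulVec k1 = k1 := by
  have hz : M.mulVec (x • k1 + y • k2 + z • k3) = 0 := by rw [hsum, Matrix.mulVec_zero]
  rw [Matrix.mulVec_add, Matrix.mulVec_add, Matrix.mulVec_smul, Matrix.mulVec_smul,
    Matrix.mulVec_smul, h2, h3] at hz
  have : x • M.mulVec k1 = x • k1 := by
    have h' : x • M.mulVec k1 + (y • k2 + z • k3) = x • k1 + (y • k2 + z • k3) := by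
      rw [← add_assoc, hz, ← add_assoc, hsum]
    exact add_right_cancel h'
  exact smul_right_injective (Fin 3 → ℤ) hx this


lemma cast_mulVec (M : Matrix (Fin 3) (Fin 3) ℤ) (k : Fin 3 → ℤ) :
    (M.map ((↑) : ℤ → ℚ)).mulVec (fun r => (k r : ℚ)) = fun r => ((M.mulVec k) r : ℚ) := by
  ext r
  simp [Matrix.mulVec, dotProduct, Matrix.map_apply]

lemma map_mul3 (X Y : Matrix (Fin 3) (Fin 3) ℤ) :
    ((X * Y).map ((↑) : ℤ → ℚ)) = X.map ((↑) : ℤ → ℚ) * Y.map ((↑) : ℤ → ℚ) := by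
  ext i j
  simp [Matrix.mul_apply, Matrix.map_apply]

lemma map_det3 (X : Matrix (Fin 3) (Fin 3) ℤ) :
    (X.map ((↑) : ℤ → ℚ)).det = ((X.det : ℤ) : ℚ) := by
  rw [show X.map ((↑) : ℤ → ℚ) = (Int.castRingHom ℚ).mapMatrix X from rfl, ← RingHom.map_det]
  rfl

lemma shape_M (X : Matrix (Fin 3) (Fin 3) ℚ)
    (c1 : X.mulVec (Pi.single 1 1) = Pi.single 1 1)
    (c2 : X.mulVec (Pi.single 2 1) = Pi.single 2 1) :
    X = !![X 0 0, 0, 0; X 1 0, 1, 0; X 2 0, 0, 1] := by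
  have h1 := fun r => congrFun c1 r
  have h2 := fun r => congrFun c2 r
  simp only [Matrix.mulVec_single, mul_one] at h1 h2
  ext r j
  fin_cases r <;> fin_cases j <;> simp_all [Pi.single_apply, Matrix.vecHead, Matrix.vecTail, funext_iff]

lemma shape_N (X : Matrix (Fin 3) (Fin 3) ℚ)
    (c1 : X.mulVec (Pi.single 0 1) = Pi.single 0 1)
    (c2 : X.mulVec (Pi.single 2 1) = Pi.single 2 1) :
    X = !![1, X 0 1, 0; 0, X 1 1, 0; 0, X 2 1, 1] := by
  have h1 := fun r => congrFun c1 r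
  have h2 := fun r => congrFun c2 r
  simp only [Matrix.mulVec_single, mul_one] at h1 h2
  ext r j
  fin_cases r <;> fin_cases j <;> simp_all [Pi.single_apply, Matrix.vecHead, Matrix.vecTail, funext_iff]

lemma shape_L (X : Matrix (Fin 3) (Fin 3) ℚ)
    (c1 : X.mulVec (Pi.single 0 1) = Pi.single 0 1)
    (c2 : X.mulVec (Pi.single 1 1) = Pi.single 1 1) :
    X = !![1, 0, X 0 2; 0, 1, X 1 2; 0, 0, X 2 2] := by
  have h1 := fun r => congrFun c1 r
  have h2 := fun r => congrFun c2 r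
  simp only [Matrix.mulVec_single, mul_one] at h1 h2
  ext r j
  fin_cases r <;> fin_cases j <;> simp_all [Pi.single_apply, Matrix.vecHead, Matrix.vecTail, funext_iff]

lemma conjMul3 (C X Y : Matrix (Fin 3) (Fin 3) ℚ) (hCC' : C * C⁻¹ = 1) :
    (C⁻¹ * X * C) * (C⁻¹ * Y * C) = C⁻¹ * (X * Y) * C := by
  simp only [Matrix.mul_assoc]
  rw [← Matrix.mul_assoc C C⁻¹ (Y * C), hCC', Matrix.one_mul]

lemma unconj (C X Y : Matrix (Fin 3) (Fin 3) ℚ) (hCC' : C * C⁻¹ = 1)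
    (h : C⁻¹ * X * C = Y) : X = C * Y * C⁻¹ := by
  rw [← h]
  simp only [Matrix.mul_assoc]
  rw [hCC', Matrix.mul_one, ← Matrix.mul_assoc, hCC', Matrix.one_mul]

lemma core_scalar (a b c d e f g h i : ℚ)
    (ha : a = 1 ∨ a = -1) (he : e = 1 ∨ e = -1) (hi : i = 1 ∨ i = -1)
    (hM : ¬(a = 1 ∧ b = 0 ∧ c = 0)) (hN : ¬(d = 0 ∧ e = 1 ∧ f = 0))
    (hL : ¬(g = 0 ∧ h = 0 ∧ i = 1))
    (e1 : d*b = 0) (e2 : d*(a-1) = 0) (e3 : b*(e-1) = 0) (e4 : f*b = 0) (e5 : c*d = 0)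
    (e6 : g*c = 0) (e7 : g*(a-1) = 0) (e8 : b*g = 0) (e9 : h*c = 0) (e10 : c*(i-1) = 0)
    (e11 : g*f = 0) (e12 : d*h = 0) (e13 : h*f = 0) (e14 : h*(e-1) = 0) (e15 : f*(i-1) = 0) :
    a = -1 ∧ b = 0 ∧ c = 0 ∧ d = 0 ∧ e = -1 ∧ f = 0 ∧ g = 0 ∧ h = 0 ∧ i = -1 := by
  have hd0 : d = 0 := by
    rcases ha with ha | ha
    · subst ha
      by_cases hb : b = 0
      · have hc : c ≠ 0 := fun hc => hM ⟨rfl, hb, hc⟩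
        exact (mul_eq_zero.mp e5).resolve_left hc
      · exact (mul_eq_zero.mp e1).resolve_right hb
    · subst ha; nlinarith [e2]
  have hg0 : g = 0 := by
    rcases ha with ha | ha
    · subst ha
      by_cases hb : b = 0
      · have hc : c ≠ 0 := fun hc => hM ⟨rfl, hb, hc⟩
        exact (mul_eq_zero.mp e6).resolve_right hc
      · exact (mul_eq_zero.mp e8).resolve_left hb
    · subst ha; nlinarith [e7]
  have hb0 : b = 0 := by
    rcases he with he | he
    · subst he
      have hf : f ≠ 0 := fun hf => hN ⟨hd0, rfl, hf⟩
      exact (mul_eq_zero.mp e4).resolve_left hf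
    · subst he; nlinarith [e3]
  have hh0 : h = 0 := by
    rcases he with he | he
    · subst he
      have hf : f ≠ 0 := fun hf => hN ⟨hd0, rfl, hf⟩
      exact (mul_eq_zero.mp e13).resolve_right hf
    · subst he; nlinarith [e14]
  have hi' : i = -1 := by
    rcases hi with hi | hi
    · exact absurd ⟨hg0, hh0, hi⟩ hL
    · exact hi
  have hc0 : c = 0 := by subst hi'; nlinarith [e10]
  have hf0 : f = 0 := by subst hi'; nlinarith [e15]
  have ha' : a = -1 := by
    rcases ha with ha | ha
    · exact absurd ⟨ha, hb0, hc0⟩ hM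
    · exact ha
  have he' : e = -1 := by
    rcases he with he | he
    · exact absurd ⟨hd0, he, hf0⟩ hN
    · exact he
  exact ⟨ha', hb0, hc0, hd0, he', hf0, hg0, hh0, hi'⟩

lemma indep_core (Mz Nz Lz : Matrix (Fin 3) (Fin 3) ℤ) (k1 k2 k3 : Fin 3 → ℤ)
    (hd : (Matrix.of ![k1, k2, k3]).det ≠ 0)
    (hMu : IsUnit Mz.det) (hNu : IsUnit Nz.det) (hLu : IsUnit Lz.det)
    (hMN : Mz * Nz = Nz * Mz) (hML : Mz * Lz = Lz * Mz) (hNL : Nz * Lz = Lz * Nz)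
    (hM2 : Mz.mulVec k2 = k2) (hM3 : Mz.mulVec k3 = k3)
    (hN1 : Nz.mulVec k1 = k1) (hN3 : Nz.mulVec k3 = k3)
    (hL1 : Lz.mulVec k1 = k1) (hL2 : Lz.mulVec k2 = k2)
    (hM1 : Mz.mulVec k1 ≠ k1) (hN2 : Nz.mulVec k2 ≠ k2) (hL3 : Lz.mulVec k3 ≠ k3) :
    Mz * Nz * Lz = -1 := by
  set q1 : Fin 3 → ℚ := fun r => (k1 r : ℚ) with hq1
  set q2 : Fin 3 → ℚ := fun r => (k2 r : ℚ) with hq2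
  set q3 : Fin 3 → ℚ := fun r => (k3 r : ℚ) with hq3
  set C : Matrix (Fin 3) (Fin 3) ℚ := Matrix.of (fun r j => ![q1, q2, q3] j r) with hC
  have hCd : C.det ≠ 0 := by
    have hCt : C = ((Int.castRingHom ℚ).mapMatrix (Matrix.of ![k1, k2, k3]))ᵀ := by
      ext r j
      fin_cases j <;> simp [hC, hq1, hq2, hq3]
    rw [hCt, Matrix.det_transpose, ← RingHom.map_det]
    simpa using hd
  have hu : IsUnit C.det := isUnit_iff_ne_zero.mpr hCd
  have hCu : IsUnit C := (Matrix.isUnit_iff_isUnit_det C).mpr hu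
  have hCC : C⁻¹ * C = 1 := Matrix.nonsing_inv_mul C hu
  have hCC' : C * C⁻¹ = 1 := Matrix.mul_nonsing_inv C hu
  have hCs : ∀ j : Fin 3, C.mulVec (Pi.single j 1) = ![q1, q2, q3] j := by
    intro j
    rw [Matrix.mulVec_single]
    ext r
    simp [hC]
  have hCs0 : C.mulVec (Pi.single 0 1) = q1 := by simpa using hCs 0
  have hCs1 : C.mulVec (Pi.single 1 1) = q2 := by simpa using hCs 1
  have hCs2 : C.mulVec (Pi.single 2 1) = q3 := by simpa using hCs 2
  set Mq := Mz.map ((↑) : ℤ → ℚ) with hMq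
  set Nq := Nz.map ((↑) : ℤ → ℚ) with hNq
  set Lq := Lz.map ((↑) : ℤ → ℚ) with hLq
  -- fixed vectors over ℚ
  have hMq2 : Mq.mulVec q2 = q2 := by rw [hMq, hq2, cast_mulVec, hM2]
  have hMq3 : Mq.mulVec q3 = q3 := by rw [hMq, hq3, cast_mulVec, hM3]
  have hNq1 : Nq.mulVec q1 = q1 := by rw [hNq, hq1, cast_mulVec, hN1]
  have hNq3 : Nq.mulVec q3 = q3 := by rw [hNq, hq3, cast_mulVec, hN3]
  have hLq1 : Lq.mulVec q1 = q1 := by rw [hLq, hq1, cast_mulVec, hL1]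
  have hLq2 : Lq.mulVec q2 = q2 := by rw [hLq, hq2, cast_mulVec, hL2]
  -- conjugated matrices
  set M' := C⁻¹ * Mq * C with hM'
  set N' := C⁻¹ * Nq * C with hN'
  set L' := C⁻¹ * Lq * C with hL'
  have colgen : ∀ (X : Matrix (Fin 3) (Fin 3) ℚ) (j : Fin 3) (q : Fin 3 → ℚ),
      C.mulVec (Pi.single j 1) = q → X.mulVec q = q →
      (C⁻¹ * X * C).mulVec (Pi.single j 1) = Pi.single j 1 := by
    intro X j q hcj hfix
    rw [← Matrix.mulVec_mulVec, ← Matrix.mulVec_mulVec, hcj, hfix, ← hcj,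
      Matrix.mulVec_mulVec, hCC, Matrix.one_mulVec]
  have colM1 := colgen Mq 1 q2 hCs1 hMq2
  have colM2 := colgen Mq 2 q3 hCs2 hMq3
  have colN0 := colgen Nq 0 q1 hCs0 hNq1
  have colN2 := colgen Nq 2 q3 hCs2 hNq3
  have colL0 := colgen Lq 0 q1 hCs0 hLq1
  have colL1 := colgen Lq 1 q2 hCs1 hLq2
  have sM : M' = !![M' 0 0, 0, 0; M' 1 0, 1, 0; M' 2 0, 0, 1] := shape_M M' colM1 colM2
  have sN : N' = !![1, N' 0 1, 0; 0, N' 1 1, 0; 0, N' 2 1, 1] := shape_N N' colN0 colN2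
  have sL : L' = !![1, 0, L' 0 2; 0, 1, L' 1 2; 0, 0, L' 2 2] := shape_L L' colL0 colL1
  set a := M' 0 0; set b := M' 1 0; set c := M' 2 0
  set d := N' 0 1; set e := N' 1 1; set f := N' 2 1
  set g := L' 0 2; set h := L' 1 2; set i := L' 2 2
  -- determinants
  have detM' : M'.det = ((Mz.det : ℤ) : ℚ) := by
    rw [hM', Matrix.det_conj' hCu, hMq, map_det3]
  have ha : a = 1 ∨ a = -1 := by
    have h1 : M'.det = a := by rw [sM]; norm_num [Matrix.det_fin_three, Matrix.vecHead, Matrix.vecTail, Matrix.cons_val_two]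
    rcases Int.isUnit_iff.mp hMu with h2 | h2 <;> [left; right] <;>
      rw [← h1, detM', h2] <;> norm_num
  have detN' : N'.det = ((Nz.det : ℤ) : ℚ) := by
    rw [hN', Matrix.det_conj' hCu, hNq, map_det3]
  have he : e = 1 ∨ e = -1 := by
    have h1 : N'.det = e := by rw [sN]; norm_num [Matrix.det_fin_three, Matrix.vecHead, Matrix.vecTail, Matrix.cons_val_two]
    rcases Int.isUnit_iff.mp hNu with h2 | h2 <;> [left; right] <;>
      rw [← h1, detN', h2] <;> norm_num
  have detL' : L'.det = ((Lz.det : ℤ) : ℚ) := by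
    rw [hL', Matrix.det_conj' hCu, hLq, map_det3]
  have hi : i = 1 ∨ i = -1 := by
    have h1 : L'.det = i := by rw [sL]; norm_num [Matrix.det_fin_three, Matrix.vecHead, Matrix.vecTail, Matrix.cons_val_two]
    rcases Int.isUnit_iff.mp hLu with h2 | h2 <;> [left; right] <;>
      rw [← h1, detL', h2] <;> norm_num
  -- non-identity conditions
  have unfix : ∀ (X : Matrix (Fin 3) (Fin 3) ℤ) (k : Fin 3 → ℤ),
      C⁻¹ * (X.map ((↑) : ℤ → ℚ)) * C = 1 → X.mulVec k = k := by
    intro X k hX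
    have hXq : X.map ((↑) : ℤ → ℚ) = 1 := by
      have := unconj C _ _ hCC' hX
      rwa [Matrix.mul_one, hCC'] at this
    have := cast_mulVec X k
    rw [hXq, Matrix.one_mulVec] at this
    ext r
    have := congrFun this r
    exact_mod_cast this.symm
  have hMcond : ¬(a = 1 ∧ b = 0 ∧ c = 0) := by
    rintro ⟨u1, u2, u3⟩
    refine hM1 (unfix Mz k1 ?_)
    rw [← hMq, ← hM', sM, u1, u2, u3]
    ext r j
    fin_cases r <;> fin_cases j <;>
      simp [Matrix.one_apply, Matrix.vecHead, Matrix.vecTail]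
  have hNcond : ¬(d = 0 ∧ e = 1 ∧ f = 0) := by
    rintro ⟨u1, u2, u3⟩
    refine hN2 (unfix Nz k2 ?_)
    rw [← hNq, ← hN', sN, u1, u2, u3]
    ext r j
    fin_cases r <;> fin_cases j <;>
      simp [Matrix.one_apply, Matrix.vecHead, Matrix.vecTail]
  have hLcond : ¬(g = 0 ∧ h = 0 ∧ i = 1) := by
    rintro ⟨u1, u2, u3⟩
    refine hL3 (unfix Lz k3 ?_)
    rw [← hLq, ← hL', sL, u1, u2, u3]
    ext r j
    fin_cases r <;> fin_cases j <;>
      simp [Matrix.one_apply, Matrix.vecHead, Matrix.vecTail]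
  -- commutativity of the conjugates
  have hMNq : Mq * Nq = Nq * Mq := by rw [hMq, hNq, ← map_mul3, ← map_mul3, hMN]
  have hMLq : Mq * Lq = Lq * Mq := by rw [hMq, hLq, ← map_mul3, ← map_mul3, hML]
  have hNLq : Nq * Lq = Lq * Nq := by rw [hNq, hLq, ← map_mul3, ← map_mul3, hNL]
  have hMN' : M' * N' = N' * M' := by
    rw [hM', hN', conjMul3 C _ _ hCC', conjMul3 C _ _ hCC', hMNq]
  have hML' : M' * L' = L' * M' := by
    rw [hM', hL', conjMul3 C _ _ hCC', conjMul3 C _ _ hCC', hMLq]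
  have hNL' : N' * L' = L' * N' := by
    rw [hN', hL', conjMul3 C _ _ hCC', conjMul3 C _ _ hCC', hNLq]
  -- extract equations
  rw [sM, sN] at hMN'
  rw [sM, sL] at hML'
  rw [sN, sL] at hNL'
  rw [← Matrix.ext_iff] at hMN' hML' hNL'
  have t00 := hMN' 0 0
  have t01 := hMN' 0 1
  have t10 := hMN' 1 0
  have t20 := hMN' 2 0
  have t21 := hMN' 2 1
  have m00 := hML' 0 0
  have m02 := hML' 0 2
  have m12 := hML' 1 2
  have m10 := hML' 1 0
  have m20 := hML' 2 0
  have n01 := hNL' 0 1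
  have n02 := hNL' 0 2
  have n21 := hNL' 2 1
  have n12 := hNL' 1 2
  have n22 := hNL' 2 2
  norm_num [Matrix.mul_apply, Fin.sum_univ_three, Matrix.vecHead, Matrix.vecTail, Matrix.cons_val_two]
    at t00 t01 t10 t20 t21 m00 m02 m12 m10 m20 n01 n02 n21 n12 n22
  have e1 : d*b = 0 := by rcases t00 with h' | h' <;> simp [h']
  have e2 : d*(a-1) = 0 := by linear_combination t01
  have e3 : b*(e-1) = 0 := by linear_combination -t10
  have e4 : f*b = 0 := by rcases t20 with h' | h' <;> simp [h']
  have e5 : c*d = 0 := by rcases t21 with h' | h' <;> simp [h']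
  have e6 : g*c = 0 := by rcases m00 with h' | h' <;> simp [h']
  have e7 : g*(a-1) = 0 := by linear_combination m02
  have e8 : b*g = 0 := by rcases m12 with h' | h' <;> simp [h']
  have e9 : h*c = 0 := by rcases m10 with h' | h' <;> simp [h']
  have e10 : c*(i-1) = 0 := by linear_combination -m20
  have e11 : g*f = 0 := by rcases n01 with h' | h' <;> simp [h']
  have e12 : d*h = 0 := by rcases n02 with h' | h' <;> simp [h']
  have e13 : h*f = 0 := by rcases n22 with h' | h' <;> simp [h']
  have e14 : h*(e-1) = 0 := by linear_combination n12
  have e15 : f*(i-1) = 0 := by linear_combination -n21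
  obtain ⟨va, vb, vc, vd, ve, vf, vg, vh, vi⟩ :=
    core_scalar a b c d e f g h i ha he hi hMcond hNcond hLcond
      e1 e2 e3 e4 e5 e6 e7 e8 e9 e10 e11 e12 e13 e14 e15
  -- the product is -1
  have hprod : M' * N' * L' = -1 := by
    rw [sM, sN, sL, va, vb, vc, vd, ve, vf, vg, vh, vi]
    ext r j
    fin_cases r <;> fin_cases j <;>
      norm_num [Matrix.mul_apply, Fin.sum_univ_three, Matrix.one_apply,
        Matrix.vecHead, Matrix.vecTail, Fin.ext_iff, Matrix.cons_val_two]
  have hq : Mq * Nq * Lq = -1 := by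
    have h1 : C⁻¹ * (Mq * Nq * Lq) * C = -1 := by
      rw [← hprod, hM', hN', hL', conjMul3 C _ _ hCC', conjMul3 C _ _ hCC']
    have := unconj C _ _ hCC' h1
    rwa [Matrix.mul_neg, Matrix.mul_one, Matrix.neg_mul, hCC'] at this
  have hmap : (Mz * Nz * Lz).map ((↑) : ℤ → ℚ) = -1 := by
    rw [map_mul3, map_mul3, ← hMq, ← hNq, ← hLq, hq]
  ext r j
  have := congrFun (congrFun hmap r) j
  rw [Matrix.map_apply] at this
  have hrhs : ((((-1 : Matrix (Fin 3) (Fin 3) ℤ) r j : ℤ)) : ℚ)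
      = (-1 : Matrix (Fin 3) (Fin 3) ℚ) r j := by
    by_cases hrj : r = j <;> simp [Matrix.neg_apply, Matrix.one_apply, hrj]
  exact_mod_cast this.trans hrhs.symm

theorem exists_index_with_trivial_restricted_fix
    (p : ℕ) (hp : 3 ≤ p)
    (A : (Fin p → ℤ) → GL (Fin 3) ℤ)
    (hA : ∀ ℓ ℓ' : Fin p → ℤ, A (ℓ + ℓ') = A ℓ * A ℓ')
    (hspec : ∀ ℓ : Fin p → ℤ, ((A ℓ : Matrix (Fin 3) (Fin 3) ℤ) - 1).det = 0)
    (hfix : ∀ k : Fin 3 → ℤ,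
      (∀ ℓ : Fin p → ℤ, (A ℓ : Matrix (Fin 3) (Fin 3) ℤ).mulVec k = k) → k = 0) :
    ∃ i : Fin p, ∀ k : Fin 3 → ℤ,
      (∀ j : Fin p, j ≠ i →
        (A (Pi.single j 1) : Matrix (Fin 3) (Fin 3) ℤ).mulVec k = k) → k = 0 := by
  by_contra hcon
  push_neg at hcon
  choose K hK1 hK2 using hcon
  set i0 : Fin p := ⟨0, by omega⟩ with hi0
  set i1 : Fin p := ⟨1, by omega⟩ with hi1
  set i2 : Fin p := ⟨2, by omega⟩ with hi2
  have h01 : i0 ≠ i1 := by simp [hi0, hi1, Fin.ext_iff]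
  have h02 : i0 ≠ i2 := by simp [hi0, hi2, Fin.ext_iff]
  have h12 : i1 ≠ i2 := by simp [hi1, hi2, Fin.ext_iff]
  set k1 := K i0 with hk1
  set k2 := K i1 with hk2
  set k3 := K i2 with hk3
  -- if K m is additionally fixed by the m-th generator, contradiction
  have fixer : ∀ m : Fin p,
      (A (Pi.single m 1) : Matrix (Fin 3) (Fin 3) ℤ).mulVec (K m) = K m → False := by
    intro m h
    refine hK2 m (hfix _ (fix_all' A hA _ ?_))
    intro j
    by_cases hj : j = m
    · rw [hj]; exact h
    · exact hK1 m j hj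
  set Dz : Matrix (Fin 3) (Fin 3) ℤ := Matrix.of ![k1, k2, k3] with hDz
  by_cases hd : Dz.det = 0
  · -- dependent case
    obtain ⟨v, hv0, hv⟩ := (Matrix.exists_vecMul_eq_zero_iff).mpr hd
    rw [hDz] at hv
    have hsum : v 0 • k1 + v 1 • k2 + v 2 • k3 = 0 := by
      ext c
      have := congrFun hv c
      simp only [Matrix.vecMul, dotProduct, Fin.sum_univ_three, Matrix.of_apply,
        Pi.zero_apply, Matrix.cons_val_zero, Matrix.cons_val_one, Matrix.head_cons,
        Matrix.cons_val_two, Matrix.tail_cons] at this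
      simpa using this
    obtain ⟨m, hm⟩ := Function.ne_iff.mp hv0
    simp only [Pi.zero_apply] at hm
    fin_cases m
    · exact fixer i0 (fixed_of_comb _ (v 0) (v 1) (v 2) k1 k2 k3 hm
        (hK1 i1 i0 h01) (hK1 i2 i0 h02) hsum)
    · refine fixer i1 (fixed_of_comb _ (v 1) (v 0) (v 2) k2 k1 k3 hm
        (hK1 i0 i1 (Ne.symm h01)) (hK1 i2 i1 h12) ?_)
      rw [← hsum]; abel
    · refine fixer i2 (fixed_of_comb _ (v 2) (v 0) (v 1) k3 k1 k2 hm
        (hK1 i0 i2 (Ne.symm h02)) (hK1 i1 i2 (Ne.symm h12)) ?_)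
      rw [← hsum]; abel
  · -- independent case
    set Mz := (A (Pi.single i0 1) : Matrix (Fin 3) (Fin 3) ℤ) with hMz
    set Nz := (A (Pi.single i1 1) : Matrix (Fin 3) (Fin 3) ℤ) with hNz
    set Lz := (A (Pi.single i2 1) : Matrix (Fin 3) (Fin 3) ℤ) with hLz
    have unit_det : ∀ ℓ : Fin p → ℤ, IsUnit ((A ℓ : Matrix (Fin 3) (Fin 3) ℤ)).det := by
      intro ℓ
      have h1 : (A ℓ : Matrix (Fin 3) (Fin 3) ℤ) * ((A ℓ)⁻¹ : GL (Fin 3) ℤ) = 1 := by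
        rw [← Units.val_mul, mul_inv_cancel, Units.val_one]
      exact IsUnit.of_mul_eq_one _ (by rw [← Matrix.det_mul, h1, Matrix.det_one])
    have comm : ∀ x y : Fin p → ℤ,
        (A x : Matrix (Fin 3) (Fin 3) ℤ) * (A y : Matrix (Fin 3) (Fin 3) ℤ)
        = (A y : Matrix (Fin 3) (Fin 3) ℤ) * (A x : Matrix (Fin 3) (Fin 3) ℤ) := by
      intro x y
      rw [← Units.val_mul, ← Units.val_mul, ← hA, ← hA, add_comm]
    have hprod := indep_core Mz Nz Lz k1 k2 k3 hd
      (unit_det _) (unit_det _) (unit_det _)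
      (comm _ _) (comm _ _) (comm _ _)
      (hK1 i1 i0 h01) (hK1 i2 i0 h02)
      (hK1 i0 i1 (Ne.symm h01)) (hK1 i2 i1 h12)
      (hK1 i0 i2 (Ne.symm h02)) (hK1 i1 i2 (Ne.symm h12))
      (fun h => fixer i0 h) (fun h => fixer i1 h) (fun h => fixer i2 h)
    have hval : (A (Pi.single i0 1 + Pi.single i1 1 + Pi.single i2 1) :
        Matrix (Fin 3) (Fin 3) ℤ) = Mz * Nz * Lz := by
      rw [hA, hA, Units.val_mul, Units.val_mul]
    have hsp := hspec (Pi.single i0 1 + Pi.single i1 1 + Pi.single i2 1)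
    rw [hval, hprod] at hsp
    have h8 : ((-1 : Matrix (Fin 3) (Fin 3) ℤ) - 1) = !![-2,0,0;0,-2,0;0,0,-2] := by
      ext r j
      fin_cases r <;> fin_cases j <;>
        simp [Matrix.neg_apply, Matrix.one_apply, Matrix.sub_apply, Matrix.vecHead, Matrix.vecTail]
    rw [h8] at hsp
    norm_num [Matrix.det_fin_three, Matrix.cons_val_two] at hsp
end

section
/- Let a, b, c, d be integers with a·d + 2(b + c) = 0, and let N = N(a,b) and M = M(c,d). Then N and M commute, N² = I, M² = I, 1 is an eigenvalue of N^n·M^m for every (n,m) ∈ ℤ², and the only k ∈ ℤ³ with N·k = k and M·k = k is k = 0. -/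
open Matrix

lemma Nmat_sq (a b : ℤ) : Nmat a b * Nmat a b = 1 := by
  rw [Nmat, Matrix.mul_fin_three, Matrix.one_fin_three]; norm_num

lemma Mmat_sq (c d : ℤ) : Mmat c d * Mmat c d = 1 := by
  rw [Mmat, Matrix.mul_fin_three, Matrix.one_fin_three]; norm_num

lemma sq_one_zpow {G : Type*} [Group G] (g : G) (hg : g ^ 2 = 1) (n : ℤ) :
    g ^ n = 1 ∨ g ^ n = g := by
  have h2 : g ^ (2 : ℤ) = 1 := by rw [zpow_two, ← pow_two, hg]
  rcases Int.even_or_odd n with ⟨q, hq⟩ | ⟨q, hq⟩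
  · left
    have hn : n = 2 * q := by omega
    rw [hn, _root_.zpow_mul, h2, _root_.one_zpow]
  · right
    have hn : n = 2 * q + 1 := by omega
    rw [hn, _root_.zpow_add, _root_.zpow_mul, h2, _root_.one_zpow, one_mul, zpow_one]

theorem fundamental_example_properties
    (a b c d : ℤ) (h : a * d + 2 * (b + c) = 0) :
    ∃ N M : GL (Fin 3) ℤ,
      (N : Matrix (Fin 3) (Fin 3) ℤ) = Nmat a b ∧
      (M : Matrix (Fin 3) (Fin 3) ℤ) = Mmat c d ∧
      N * M = M * N ∧ N ^ 2 = 1 ∧ M ^ 2 = 1 ∧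
      (∀ n m : ℤ, (((N ^ n * M ^ m : GL (Fin 3) ℤ) :
        Matrix (Fin 3) (Fin 3) ℤ) - 1).det = 0) ∧
      (∀ k : Fin 3 → ℤ,
        (N : Matrix (Fin 3) (Fin 3) ℤ).mulVec k = k →
        (M : Matrix (Fin 3) (Fin 3) ℤ).mulVec k = k → k = 0) := by
  refine ⟨⟨Nmat a b, Nmat a b, Nmat_sq a b, Nmat_sq a b⟩,
    ⟨Mmat c d, Mmat c d, Mmat_sq c d, Mmat_sq c d⟩, rfl, rfl, ?_, ?_, ?_, ?_, ?_⟩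
  · ext : 1
    show Nmat a b * Mmat c d = Mmat c d * Nmat a b
    rw [Nmat, Mmat, Matrix.mul_fin_three, Matrix.mul_fin_three]
    norm_num
    rw [show c + a * d + b = -b + -c from by linarith]
  · ext : 1
    rw [Units.val_pow_eq_pow_val, Units.val_one, pow_two]
    exact Nmat_sq a b
  · ext : 1
    rw [Units.val_pow_eq_pow_val, Units.val_one, pow_two]
    exact Mmat_sq c d
  · intro n m
    set N : GL (Fin 3) ℤ := ⟨Nmat a b, Nmat a b, Nmat_sq a b, Nmat_sq a b⟩ with hNdef
    set M : GL (Fin 3) ℤ := ⟨Mmat c d, Mmat c d, Mmat_sq c d, Mmat_sq c d⟩ with hMdef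
    have hN2 : N ^ 2 = 1 := by
      ext : 1; rw [Units.val_pow_eq_pow_val, Units.val_one, pow_two]; exact Nmat_sq a b
    have hM2 : M ^ 2 = 1 := by
      ext : 1; rw [Units.val_pow_eq_pow_val, Units.val_one, pow_two]; exact Mmat_sq c d
    have hdet : ∀ X : Matrix (Fin 3) (Fin 3) ℤ,
        X = 1 ∨ X = Nmat a b ∨ X = Mmat c d ∨ X = Nmat a b * Mmat c d →
        (X - 1).det = 0 := by
      rintro X (rfl | rfl | rfl | rfl)
      · simp
      · rw [Nmat]
        norm_num [Matrix.det_fin_three, Matrix.sub_apply, Matrix.one_fin_three]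
      · rw [Mmat]
        simp [Matrix.det_fin_three, Matrix.sub_apply]
      · rw [Nmat, Mmat, Matrix.mul_fin_three]
        simp [Matrix.det_fin_three, Matrix.sub_apply]
    have hco : ((N ^ n * M ^ m : GL (Fin 3) ℤ) : Matrix (Fin 3) (Fin 3) ℤ)
        = ((N ^ n : GL (Fin 3) ℤ) : Matrix (Fin 3) (Fin 3) ℤ) *
          ((M ^ m : GL (Fin 3) ℤ) : Matrix (Fin 3) (Fin 3) ℤ) := rfl
    rcases sq_one_zpow N hN2 n with h1 | h1 <;> rcases sq_one_zpow M hM2 m with h2 | h2 <;>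
        rw [hco, h1, h2] <;> apply hdet
    · left; rw [Units.val_one, one_mul]
    · right; right; left; rw [Units.val_one, one_mul]
    · right; left; rw [Units.val_one, mul_one]
    · right; right; right; rfl
  · intro k hN hM
    have h1 := congrFun hN 1
    have h2 := congrFun hN 2
    have h0 := congrFun hM 0
    simp [Nmat, Mmat, Matrix.mulVec, dotProduct, Fin.sum_univ_three, Matrix.vecHead, Matrix.vecTail] at h1 h2 h0
    have hk1 : k 1 = 0 := by linarith
    have hk2 : k 2 = 0 := by linarith
    rw [hk2] at h0
    have hk0 : k 0 = 0 := by linarith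
    funext i
    fin_cases i <;> simpa
end
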